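/- arXiv:2104.14172 — 5 statements merged into one kernel-verified Lean document; each statement's English description precedes it below -/
import Mathlib

section
/- If v is a dominant vertex of a graph G (adjacent to all other vertices), then A(G) = A(G − v) + 1. -/
open Finset

/-- A partition of the vertex set of `G` into independent (stable) sets. -/
def IsStablePartition {V : Type*} [Fintype V] [DecidableEq V] (G : SimpleGraph V)
    (P : Finpartition (Finset.univ : Finset V)) : Prop :=
  ∀ p ∈ P.parts, ∀ u ∈ p, ∀ v ∈ p, ¬ G.Adj u v

/-- `colS G k` : number of non-equivalent colorings of `G` with exactly `k` colors. -/
noncomputable def colS {V : Type*} [Fintype V] [DecidableEq V] (G : SimpleGraph V) (k : ℕ) : ℕ :=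
  Set.ncard {P : Finpartition (Finset.univ : Finset V) |
    IsStablePartition G P ∧ P.parts.card = k}

/-- `colB G` : total number of non-equivalent colorings of `G`. -/
noncomputable def colB {V : Type*} [Fintype V] [DecidableEq V] (G : SimpleGraph V) : ℕ :=
  ∑ k ∈ Finset.range (Fintype.card V + 1), colS G k

/-- `colT G` : total number of color classes over all non-equivalent colorings of `G`. -/
noncomputable def colT {V : Type*} [Fintype V] [DecidableEq V] (G : SimpleGraph V) : ℕ :=
  ∑ k ∈ Finset.range (Fintype.card V + 1), k * colS G k

/-- `colA G` : average number of colors in the non-equivalent colorings of `G`. -/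
noncomputable def colA {V : Type*} [Fintype V] [DecidableEq V] (G : SimpleGraph V) : ℚ :=
  (colT G : ℚ) / (colB G : ℚ)

/-- Disjoint union of two graphs. -/
def graphUnion {V W : Type*} (G : SimpleGraph V) (H : SimpleGraph W) : SimpleGraph (V ⊕ W) where
  Adj a b := match a, b with
    | Sum.inl x, Sum.inl y => G.Adj x y
    | Sum.inr x, Sum.inr y => H.Adj x y
    | _, _ => False
  symm := ⟨by rintro (x|x) (y|y) h <;> first | exact h.symm | exact h.elim⟩
  loopless := ⟨by rintro (x|x) h <;> first | exact G.loopless.irrefl x h | exact H.loopless.irrefl x h⟩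

/-- Join of two graphs: disjoint union plus all cross edges. -/
def graphJoin {V W : Type*} (G : SimpleGraph V) (H : SimpleGraph W) : SimpleGraph (V ⊕ W) where
  Adj a b := match a, b with
    | Sum.inl x, Sum.inl y => G.Adj x y
    | Sum.inr x, Sum.inr y => H.Adj x y
    | _, _ => True
  symm := ⟨by rintro (x|x) (y|y) h <;> first | exact h.symm | trivial⟩
  loopless := ⟨by rintro (x|x) h <;> first | exact G.loopless.irrefl x h | exact H.loopless.irrefl x h⟩

/-- Deletion of a vertex. -/
def deleteVertex {V : Type*} (G : SimpleGraph V) (v : V) : SimpleGraph {x : V // x ≠ v} :=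
  G.induce {x : V | x ≠ v}


section Lift
variable {V : Type*} [Fintype V] [DecidableEq V] (v : V)

lemma not_mem_mapSub (p : Finset {x : V // x ≠ v}) :
    v ∉ p.map (Function.Embedding.subtype _) := by
  simp only [Finset.mem_map, Function.Embedding.coe_subtype]
  rintro ⟨⟨x, hx⟩, -, h⟩
  exact hx h

/-- Lift a partition of `V \ {v}` to a partition of `V` by adding `{v}` as a part. -/
def liftPart (P : Finpartition (univ : Finset {x : V // x ≠ v})) :
    Finpartition (univ : Finset V) where
  parts := insert {v} (P.parts.image (fun p => p.map (Function.Embedding.subtype _)))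
  supIndep := by
    rw [Finset.supIndep_iff_pairwiseDisjoint]
    intro a ha b hb hab
    simp only [Finset.coe_insert, Set.mem_insert_iff, Finset.mem_coe, Finset.mem_image] at ha hb
    simp only [Function.onFun, id_eq]
    obtain rfl | ⟨p, hp, rfl⟩ := ha
    · obtain rfl | ⟨q, hq, rfl⟩ := hb
      · exact absurd rfl hab
      · rw [Finset.disjoint_left]
        intro x hx
        rw [Finset.mem_singleton] at hx
        rw [hx]
        exact not_mem_mapSub _ q
    · obtain rfl | ⟨q, hq, rfl⟩ := hb
      · rw [Finset.disjoint_right]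
        intro x hx
        rw [Finset.mem_singleton] at hx
        rw [hx]
        exact not_mem_mapSub _ p
      · have hpq : p ≠ q := fun h => hab (by rw [h])
        have hd := P.disjoint (Finset.mem_coe.2 hp) (Finset.mem_coe.2 hq) hpq
        simp only [Function.onFun, id_eq] at hd
        exact (Finset.disjoint_map _).2 hd
  sup_parts := by
    ext x
    refine ⟨fun _ => Finset.mem_univ x, fun _ => ?_⟩
    simp only [Finset.sup_insert, id_eq, Finset.sup_eq_union, Finset.mem_union]
    by_cases hx : x = v
    · left; simp [hx]
    · right
      rw [Finset.mem_sup]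
      obtain ⟨p, hp, hxp⟩ := P.exists_mem (Finset.mem_univ (⟨x, hx⟩ : {x : V // x ≠ v}))
      exact ⟨p.map (Function.Embedding.subtype _), Finset.mem_image_of_mem _ hp,
        Finset.mem_map.2 ⟨⟨x, hx⟩, hxp, rfl⟩⟩
  bot_notMem := by
    simp only [Finset.bot_eq_empty, Finset.mem_insert, Finset.mem_image]
    rintro (h | ⟨p, hp, h⟩)
    · exact (Finset.singleton_ne_empty v) h.symm
    · rw [Finset.map_eq_empty] at h
      subst h
      exact P.bot_notMem hp

lemma liftPart_injective : Function.Injective (liftPart (V := V) v) := by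
  intro P Q h
  have h' : insert {v} (P.parts.image (fun p => p.map (Function.Embedding.subtype (· ≠ v))))
      = insert {v} (Q.parts.image (fun p => p.map (Function.Embedding.subtype (· ≠ v)))) :=
    congrArg Finpartition.parts h
  have hP : ({v} : Finset V) ∉ P.parts.image (fun p => p.map (Function.Embedding.subtype (· ≠ v))) := by
    simp only [Finset.mem_image]
    rintro ⟨p, -, hp⟩
    exact not_mem_mapSub v p (hp ▸ Finset.mem_singleton_self v)
  have hQ : ({v} : Finset V) ∉ Q.parts.image (fun p => p.map (Function.Embedding.subtype (· ≠ v))) := by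
    simp only [Finset.mem_image]
    rintro ⟨p, -, hp⟩
    exact not_mem_mapSub v p (hp ▸ Finset.mem_singleton_self v)
  have h2 := congrArg (fun s => Finset.erase s ({v} : Finset V)) h'
  simp only [Finset.erase_insert hP, Finset.erase_insert hQ] at h2
  have h3 : P.parts = Q.parts :=
    Finset.image_injective (Finset.map_injective _) h2
  exact Finpartition.ext h3

lemma liftPart_card (P : Finpartition (univ : Finset {x : V // x ≠ v})) :
    (liftPart v P).parts.card = P.parts.card + 1 := by
  have hP : ({v} : Finset V) ∉ P.parts.image (fun p => p.map (Function.Embedding.subtype (· ≠ v))) := by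
    simp only [Finset.mem_image]
    rintro ⟨p, -, hp⟩
    exact not_mem_mapSub v p (hp ▸ Finset.mem_singleton_self v)
  rw [show (liftPart v P).parts = insert {v} (P.parts.image (fun p => p.map (Function.Embedding.subtype (· ≠ v)))) from rfl,
    Finset.card_insert_of_notMem hP,
    Finset.card_image_of_injective _ (Finset.map_injective _)]

lemma v_not_mem_of_erase (Q : Finpartition (univ : Finset V)) (hQ : ({v} : Finset V) ∈ Q.parts)
    {q : Finset V} (hq : q ∈ Q.parts.erase {v}) : v ∉ q := by
  intro hvq
  obtain ⟨hne, hqp⟩ := Finset.mem_erase.1 hq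
  exact hne (Q.eq_of_mem_parts hqp hQ hvq (Finset.mem_singleton_self v))

/-- Pull back a partition of `V` having `{v}` as a part to a partition of `V \ {v}`. -/
def unliftPart (Q : Finpartition (univ : Finset V)) (hQ : ({v} : Finset V) ∈ Q.parts) :
    Finpartition (univ : Finset {x : V // x ≠ v}) where
  parts := (Q.parts.erase {v}).image (Finset.subtype (· ≠ v))
  supIndep := by
    rw [Finset.supIndep_iff_pairwiseDisjoint]
    intro a ha b hb hab
    simp only [Finset.coe_image, Set.mem_image, Finset.mem_coe] at ha hb
    obtain ⟨q₁, hq₁, rfl⟩ := ha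
    obtain ⟨q₂, hq₂, rfl⟩ := hb
    have hne : q₁ ≠ q₂ := fun h => hab (by rw [h])
    have hd := Q.disjoint (Finset.mem_coe.2 (Finset.mem_of_mem_erase hq₁))
      (Finset.mem_coe.2 (Finset.mem_of_mem_erase hq₂)) hne
    simp only [Function.onFun, id_eq] at hd ⊢
    rw [Finset.disjoint_left] at hd ⊢
    intro x hx hx'
    exact hd (Finset.mem_subtype.1 hx) (Finset.mem_subtype.1 hx')
  sup_parts := by
    ext x
    refine ⟨fun _ => Finset.mem_univ _, fun _ => ?_⟩
    rw [Finset.mem_sup]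
    obtain ⟨q, hq, hxq⟩ := Q.exists_mem (Finset.mem_univ (x : V))
    have hqv : q ≠ {v} := by
      intro h
      rw [h, Finset.mem_singleton] at hxq
      exact x.2 hxq
    exact ⟨q.subtype _, Finset.mem_image_of_mem _ (Finset.mem_erase.2 ⟨hqv, hq⟩),
      Finset.mem_subtype.2 hxq⟩
  bot_notMem := by
    simp only [Finset.bot_eq_empty, Finset.mem_image]
    rintro ⟨q, hq, h⟩
    obtain ⟨a, ha⟩ := Q.nonempty_of_mem_parts (Finset.mem_of_mem_erase hq)
    have hane : a ≠ v := fun hav => v_not_mem_of_erase v Q hQ hq (hav ▸ ha)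
    have : (⟨a, hane⟩ : {x : V // x ≠ v}) ∈ q.subtype (· ≠ v) := Finset.mem_subtype.2 ha
    rw [h] at this
    exact absurd this (Finset.notMem_empty _)

lemma subtype_map_eq (Q : Finpartition (univ : Finset V)) (hQ : ({v} : Finset V) ∈ Q.parts)
    {q : Finset V} (hq : q ∈ Q.parts.erase {v}) :
    (q.subtype (· ≠ v)).map (Function.Embedding.subtype _) = q := by
  apply Finset.subtype_map_of_mem
  intro x hx hxv
  exact v_not_mem_of_erase v Q hQ hq (hxv ▸ hx)

lemma lift_unlift (Q : Finpartition (univ : Finset V)) (hQ : ({v} : Finset V) ∈ Q.parts) :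
    liftPart v (unliftPart v Q hQ) = Q := by
  apply Finpartition.ext
  show insert {v} (((Q.parts.erase {v}).image (Finset.subtype (· ≠ v))).image
      (fun p => p.map (Function.Embedding.subtype _))) = Q.parts
  rw [Finset.image_image]
  have hcongr : ∀ q ∈ Q.parts.erase {v},
      ((fun p => Finset.map (Function.Embedding.subtype (· ≠ v)) p) ∘ Finset.subtype (· ≠ v)) q
        = id q := by
    intro q hq
    simp only [Function.comp_apply, id_eq]
    exact subtype_map_eq v Q hQ hq
  rw [Finset.image_congr hcongr, Finset.image_id, Finset.insert_erase hQ]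

lemma unliftPart_card (Q : Finpartition (univ : Finset V)) (hQ : ({v} : Finset V) ∈ Q.parts) :
    (unliftPart v Q hQ).parts.card = Q.parts.card - 1 := by
  show ((Q.parts.erase {v}).image (Finset.subtype (· ≠ v))).card = Q.parts.card - 1
  rw [Finset.card_image_of_injOn, Finset.card_erase_of_mem hQ]
  intro q₁ hq₁ q₂ hq₂ h
  rw [← subtype_map_eq v Q hQ (Finset.mem_coe.1 hq₁), ← subtype_map_eq v Q hQ (Finset.mem_coe.1 hq₂), h]

lemma stable_lift (G : SimpleGraph V) (P : Finpartition (univ : Finset {x : V // x ≠ v}))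
    (h : IsStablePartition (deleteVertex G v) P) : IsStablePartition G (liftPart v P) := by
  intro p hp u hu w hw
  rcases Finset.mem_insert.1 hp with rfl | hp'
  · rw [Finset.mem_singleton] at hu hw
    rw [hu, hw]
    exact G.loopless.irrefl v
  · obtain ⟨q, hq, rfl⟩ := Finset.mem_image.1 hp'
    obtain ⟨u', hu', rfl⟩ := Finset.mem_map.1 hu
    obtain ⟨w', hw', rfl⟩ := Finset.mem_map.1 hw
    exact h q hq u' hu' w' hw'

lemma stable_unlift (G : SimpleGraph V) (Q : Finpartition (univ : Finset V))
    (hQ : ({v} : Finset V) ∈ Q.parts) (h : IsStablePartition G Q) :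
    IsStablePartition (deleteVertex G v) (unliftPart v Q hQ) := by
  intro p hp u hu w hw
  obtain ⟨q, hq, rfl⟩ := Finset.mem_image.1 hp
  exact h q (Finset.mem_of_mem_erase hq) u (Finset.mem_subtype.1 hu) w (Finset.mem_subtype.1 hw)

lemma singleton_mem_of_stable (G : SimpleGraph V) (hv : ∀ w : V, w ≠ v → G.Adj v w)
    (Q : Finpartition (univ : Finset V)) (hs : IsStablePartition G Q) :
    ({v} : Finset V) ∈ Q.parts := by
  obtain ⟨t, ht, hvt⟩ := Q.exists_mem (Finset.mem_univ v)
  have heq : t = {v} := by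
    apply Finset.eq_singleton_iff_unique_mem.2
    refine ⟨hvt, fun u hu => ?_⟩
    by_contra hne
    exact hs t ht v hvt u hu (hv u hne)
  exact heq ▸ ht

lemma colS_succ (G : SimpleGraph V) (hv : ∀ w : V, w ≠ v → G.Adj v w) (k : ℕ) :
    colS G (k + 1) = colS (deleteVertex G v) k := by
  have himg : {Q : Finpartition (univ : Finset V) | IsStablePartition G Q ∧ Q.parts.card = k + 1}
      = liftPart v '' {P : Finpartition (univ : Finset {x : V // x ≠ v}) |
          IsStablePartition (deleteVertex G v) P ∧ P.parts.card = k} := by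
    ext Q
    constructor
    · rintro ⟨hs, hc⟩
      have hQ := singleton_mem_of_stable v G hv Q hs
      refine ⟨unliftPart v Q hQ, ⟨stable_unlift v G Q hQ hs, ?_⟩, lift_unlift v Q hQ⟩
      rw [unliftPart_card, hc]
      simp
    · rintro ⟨P, ⟨hs, hc⟩, rfl⟩
      exact ⟨stable_lift v G P hs, by rw [liftPart_card, hc]⟩
  rw [colS, colS, himg, Set.ncard_image_of_injective _ (liftPart_injective v)]

lemma colS_zero [Nonempty V] (G : SimpleGraph V) : colS G 0 = 0 := by
  rw [colS, Set.ncard_eq_zero]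
  rw [Set.eq_empty_iff_forall_notMem]
  rintro P ⟨-, h⟩
  rw [Finset.card_eq_zero] at h
  have hsup := P.sup_parts
  rw [h, Finset.sup_empty] at hsup
  obtain ⟨x, hx⟩ := Finset.univ_nonempty (α := V)
  rw [← hsup] at hx
  exact absurd hx (Finset.notMem_empty x)

end Lift

lemma colB_pos {W : Type*} [Fintype W] [DecidableEq W] (H : SimpleGraph W) : 0 < colB H := by
  have hmem : (⊥ : Finpartition (univ : Finset W)) ∈
      {P : Finpartition (univ : Finset W) | IsStablePartition H P ∧
        P.parts.card = Fintype.card W} := by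
    refine ⟨?_, ?_⟩
    · intro p hp u hu w hw
      rw [Finpartition.mem_bot_iff] at hp
      obtain ⟨a, -, rfl⟩ := hp
      rw [Finset.mem_singleton] at hu hw
      rw [hu, hw]
      exact H.loopless.irrefl a
    · rw [Finpartition.card_bot, Finset.card_univ]
  have h1 : 0 < colS H (Fintype.card W) := by
    rw [colS]
    exact (Set.ncard_pos (Set.toFinite _)).2 ⟨_, hmem⟩
  calc 0 < colS H (Fintype.card W) := h1
    _ ≤ colB H := Finset.single_le_sum (f := fun k => colS H k) (fun _ _ => Nat.zero_le _)
        (Finset.self_mem_range_succ _)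

theorem stmt3 {V : Type*} [Fintype V] [DecidableEq V] (G : SimpleGraph V) (v : V)
    (hv : ∀ w : V, w ≠ v → G.Adj v w) :
    colA G = colA (deleteVertex G v) + 1 := by
  haveI : Nonempty V := ⟨v⟩
  have hcard : Fintype.card {x : V // x ≠ v} = Fintype.card V - 1 :=
    (Fintype.card_subtype_compl _).trans (by rw [Fintype.card_subtype_eq])
  have hnpos : 0 < Fintype.card V := Fintype.card_pos
  have hrange : Fintype.card {x : V // x ≠ v} + 1 = Fintype.card V := by
    rw [hcard]; omega
  have hS : ∀ k, colS G (k + 1) = colS (deleteVertex G v) k := colS_succ v G hv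
  have hB : colB G = colB (deleteVertex G v) := by
    rw [colB, colB, hrange, Finset.sum_range_succ', colS_zero, add_zero]
    exact Finset.sum_congr rfl fun i _ => hS i
  have hT : colT G = colT (deleteVertex G v) + colB (deleteVertex G v) := by
    rw [colT, colT, colB, hrange, Finset.sum_range_succ', zero_mul, add_zero,
      ← Finset.sum_add_distrib]
    exact Finset.sum_congr rfl fun i _ => by rw [hS i, add_mul, one_mul]
  have hB' : ((colB (deleteVertex G v) : ℕ) : ℚ) ≠ 0 := by
    exact_mod_cast (colB_pos (deleteVertex G v)).ne'
  rw [colA, colA, hT, hB, Nat.cast_add, add_div, div_self hB']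
end

section
/- Let v be a vertex in a finite simple graph G with neighborhood N(v). If the chromatic number of the subgraph induced by N(v) is at least |N(v)| − 3, then A(G) > A(G − v). -/
set_option linter.unusedSectionVars false

open Finset

section Counting

variable {V : Type*} [Fintype V] [DecidableEq V]

/-- The finset of stable partitions. -/
noncomputable def SPF (G : SimpleGraph V) : Finset (Finpartition (univ : Finset V)) :=
  @Finset.filter _ (fun P => IsStablePartition G P) (Classical.decPred _) univ

lemma mem_SPF {G : SimpleGraph V} {P : Finpartition (univ : Finset V)} :
    P ∈ SPF G ↔ IsStablePartition G P := by
  classical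
  rw [SPF]
  rw [Finset.mem_filter]
  simp

lemma colS_eq (G : SimpleGraph V) (k : ℕ) :
    colS G k = ((SPF G).filter (fun P => P.parts.card = k)).card := by
  classical
  rw [colS, show {P : Finpartition (univ : Finset V) | IsStablePartition G P ∧ P.parts.card = k}
      = ↑((SPF G).filter (fun P => P.parts.card = k)) from by
    ext P; simp [mem_SPF]]
  exact Set.ncard_coe_finset _

lemma parts_card_mem_range (P : Finpartition (univ : Finset V)) :
    P.parts.card ∈ Finset.range (Fintype.card V + 1) := by
  rw [Finset.mem_range, Nat.lt_succ_iff]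
  simpa using P.card_parts_le_card

lemma colB_eq (G : SimpleGraph V) : colB G = (SPF G).card := by
  classical
  rw [colB]
  simp_rw [colS_eq]
  exact (Finset.card_eq_sum_card_fiberwise fun P _ => parts_card_mem_range P).symm

lemma colT_eq (G : SimpleGraph V) : colT G = ∑ P ∈ SPF G, P.parts.card := by
  classical
  rw [colT]
  rw [← Finset.sum_fiberwise_of_maps_to (fun P _ => parts_card_mem_range P)
    (fun P : Finpartition (univ : Finset V) => P.parts.card)]
  refine Finset.sum_congr rfl fun k _ => ?_
  rw [colS_eq]
  rw [Finset.sum_congr rfl (fun P hP => ((Finset.mem_filter.mp hP).2 :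
    P.parts.card = k))]
  rw [Finset.sum_const, smul_eq_mul, mul_comm]

end Counting

section Main

variable {V : Type*} [Fintype V] [DecidableEq V]

/-- Lift a finset of the subtype to the base type. -/
def vlift {v : V} (p : Finset {x : V // x ≠ v}) : Finset V :=
  p.map (Function.Embedding.subtype _)

/-- Restrict a finset of the base type to the subtype. -/
def vdel (v : V) (p : Finset V) : Finset {x : V // x ≠ v} :=
  p.subtype _

variable {v : V}

@[simp] lemma mem_vlift {p : Finset {x : V // x ≠ v}} {x : V} :
    x ∈ vlift p ↔ ∃ a ∈ p, ↑a = x := by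
  simp [vlift, Finset.mem_map, Function.Embedding.coe_subtype]

@[simp] lemma coe_mem_vlift {p : Finset {x : V // x ≠ v}} {a : {x : V // x ≠ v}} :
    (↑a : V) ∈ vlift p ↔ a ∈ p := by
  rw [mem_vlift]
  constructor
  · rintro ⟨b, hb, hba⟩
    rwa [Subtype.coe_injective hba] at hb
  · exact fun h => ⟨a, h, rfl⟩

@[simp] lemma mem_vdel {p : Finset V} {a : {x : V // x ≠ v}} :
    a ∈ vdel v p ↔ ↑a ∈ p := by
  simp [vdel]

@[simp] lemma vdel_vlift (p : Finset {x : V // x ≠ v}) : vdel v (vlift p) = p := by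
  ext a
  simp only [mem_vdel, coe_mem_vlift]

lemma vlift_vdel {p : Finset V} (h : v ∉ p) : vlift (vdel v p) = p := by
  ext x
  simp only [mem_vlift, mem_vdel]
  constructor
  · rintro ⟨a, ha, rfl⟩; exact ha
  · intro hx
    exact ⟨⟨x, fun hxv => h (hxv ▸ hx)⟩, hx, rfl⟩

lemma vlift_vdel_erase (p : Finset V) : vlift (vdel v p) = p.erase v := by
  rw [← vlift_vdel (Finset.notMem_erase v p)]
  congr 1
  ext a
  simp [Finset.mem_erase, a.prop]

lemma vlift_injective : Function.Injective (vlift (v := v)) :=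
  Finset.map_injective _

lemma not_mem_vlift (p : Finset {x : V // x ≠ v}) : v ∉ vlift p := by
  simp only [mem_vlift, not_exists]
  rintro a ⟨ha, hav⟩
  exact a.prop hav

@[simp] lemma vlift_nonempty {p : Finset {x : V // x ≠ v}} :
    (vlift p).Nonempty ↔ p.Nonempty := Finset.map_nonempty

@[simp] lemma vlift_eq_empty {p : Finset {x : V // x ≠ v}} :
    vlift p = ∅ ↔ p = ∅ := Finset.map_eq_empty

lemma disjoint_vlift {p q : Finset {x : V // x ≠ v}} :
    Disjoint (vlift p) (vlift q) ↔ Disjoint p q := Finset.disjoint_map _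

lemma disjoint_vdel {p q : Finset V} (h : Disjoint p q) :
    Disjoint (vdel v p) (vdel v q) := by
  rw [Finset.disjoint_left] at h ⊢
  intro a ha hb
  exact h (mem_vdel.mp ha) (mem_vdel.mp hb)

lemma vdel_insert_self (p : Finset V) : vdel v (insert v p) = vdel v p := by
  ext a
  simp [a.prop]

/-- Restriction of a partition of `V` to a partition of `V - v`. -/
def vres (v : V) (P : Finpartition (univ : Finset V)) :
    Finpartition (univ : Finset {x : V // x ≠ v}) :=
  Finpartition.ofErase (P.parts.image (vdel v))
    (by
      rw [Finset.supIndep_iff_pairwiseDisjoint]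
      rintro a ha b hb hab
      obtain ⟨p, hp, rfl⟩ := Finset.mem_image.mp ha
      obtain ⟨q, hq, rfl⟩ := Finset.mem_image.mp hb
      exact disjoint_vdel (P.disjoint hp hq (fun h => hab (by rw [h])))
    )
    (by
      refine Finset.eq_univ_of_forall fun a => ?_
      rw [Finset.mem_sup]
      obtain ⟨p, hp, hap⟩ := P.exists_mem (Finset.mem_univ (↑a : V))
      exact ⟨vdel v p, Finset.mem_image_of_mem _ hp, mem_vdel.mpr hap⟩)

lemma vres_parts (P : Finpartition (univ : Finset V)) :
    (vres v P).parts = (P.parts.image (vdel v)).erase ∅ := by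
  rw [vres, Finpartition.ofErase_parts]
  rfl

/-- Extension of a partition of `V - v` to one of `V`, placing `v` in (the lift of) `q`. -/
def extP (v : V) (P' : Finpartition (univ : Finset {x : V // x ≠ v})) (q : Finset {x : V // x ≠ v})
    (hq : q = ∅ ∨ q ∈ P'.parts) : Finpartition (univ : Finset V) where
  parts := insert (insert v (vlift q)) ((P'.parts.erase q).image vlift)
  supIndep := by
    have hd : ∀ r ∈ P'.parts.erase q, Disjoint (insert v (vlift q)) (vlift r) := by
      intro r hr
      obtain ⟨hrq, hr⟩ := Finset.mem_erase.mp hr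
      rw [Finset.disjoint_insert_left]
      refine ⟨not_mem_vlift r, disjoint_vlift.mpr ?_⟩
      rcases hq with rfl | hq
      · exact Finset.disjoint_empty_left r
      · exact P'.disjoint hq hr (fun h => hrq h.symm)
    rw [Finset.supIndep_iff_pairwiseDisjoint]
    rintro a ha b hb hab
    simp only [Finset.coe_insert, Set.mem_insert_iff, Finset.coe_image, Set.mem_image,
      Finset.mem_coe] at ha hb
    rcases ha with rfl | ⟨r, hr, rfl⟩ <;> rcases hb with rfl | ⟨r', hr', rfl⟩
    · exact absurd rfl hab
    · exact hd r' hr'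
    · exact (hd r hr).symm
    · refine disjoint_vlift.mpr (P'.disjoint (Finset.mem_of_mem_erase hr)
        (Finset.mem_of_mem_erase hr') (fun h => hab (by rw [h])))
  sup_parts := by
    refine Finset.eq_univ_of_forall fun x => ?_
    rw [Finset.mem_sup]
    by_cases hxv : x = v
    · exact ⟨_, Finset.mem_insert_self _ _, by simp [hxv]⟩
    · obtain ⟨p, hp, hxp⟩ := P'.exists_mem (Finset.mem_univ (⟨x, hxv⟩ : {x : V // x ≠ v}))
      by_cases hpq : p = q
      · refine ⟨_, Finset.mem_insert_self _ _, ?_⟩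
        subst hpq
        exact Finset.mem_insert_of_mem (coe_mem_vlift.mpr hxp)
      · refine ⟨vlift p, Finset.mem_insert_of_mem (Finset.mem_image_of_mem _
          (Finset.mem_erase.mpr ⟨hpq, hp⟩)), coe_mem_vlift.mpr hxp⟩
  bot_notMem := by
    simp only [bot_eq_empty, Finset.mem_insert, Finset.mem_image, not_or, not_exists]
    constructor
    · intro h
      exact (Finset.insert_ne_empty _ _) h.symm
    · rintro r ⟨hr, hrv⟩
      exact P'.ne_bot (Finset.mem_of_mem_erase hr)
        (by rw [bot_eq_empty]; exact vlift_eq_empty.mp hrv)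

lemma extP_parts (P' : Finpartition (univ : Finset {x : V // x ≠ v}))
    (q : Finset {x : V // x ≠ v}) (hq : q = ∅ ∨ q ∈ P'.parts) :
    (extP v P' q hq).parts = insert (insert v (vlift q)) ((P'.parts.erase q).image vlift) := rfl

lemma insert_not_mem_image_vlift (q : Finset {x : V // x ≠ v})
    (s : Finset (Finset {x : V // x ≠ v})) :
    insert v (vlift q) ∉ s.image vlift := by
  rw [Finset.mem_image]
  rintro ⟨r, hr, hrv⟩
  exact not_mem_vlift r (hrv ▸ Finset.mem_insert_self v _)

lemma extP_parts_card (P' : Finpartition (univ : Finset {x : V // x ≠ v}))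
    (q : Finset {x : V // x ≠ v}) (hq : q = ∅ ∨ q ∈ P'.parts) :
    (extP v P' q hq).parts.card = (P'.parts.erase q).card + 1 := by
  rw [extP_parts, Finset.card_insert_of_notMem (insert_not_mem_image_vlift q _),
    Finset.card_image_of_injective _ vlift_injective]

lemma extP_parts_card_none (P' : Finpartition (univ : Finset {x : V // x ≠ v}))
    (hq : (∅ : Finset {x : V // x ≠ v}) = ∅ ∨ (∅ : Finset {x : V // x ≠ v}) ∈ P'.parts) :
    (extP v P' ∅ hq).parts.card = P'.parts.card + 1 := by
  rw [extP_parts_card, Finset.erase_eq_of_notMem (by simpa using P'.bot_notMem)]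

lemma extP_parts_card_some (P' : Finpartition (univ : Finset {x : V // x ≠ v}))
    (q : Finset {x : V // x ≠ v}) (hqm : q ∈ P'.parts) (hq : q = ∅ ∨ q ∈ P'.parts) :
    (extP v P' q hq).parts.card = P'.parts.card := by
  rw [extP_parts_card, Finset.card_erase_of_mem hqm,
    Nat.sub_add_cancel (Finset.card_pos.mpr ⟨q, hqm⟩)]

lemma vres_extP (P' : Finpartition (univ : Finset {x : V // x ≠ v}))
    (q : Finset {x : V // x ≠ v}) (hq : q = ∅ ∨ q ∈ P'.parts) :
    vres v (extP v P' q hq) = P' := by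
  have hne : (∅ : Finset {x : V // x ≠ v}) ∉ P'.parts := by
    simpa using P'.bot_notMem
  apply Finpartition.ext
  rw [vres_parts, extP_parts, Finset.image_insert, vdel_insert_self, vdel_vlift,
    Finset.image_image,
    show vdel v ∘ vlift = id from funext vdel_vlift, Finset.image_id]
  rcases hq with rfl | hq
  · rw [Finset.erase_eq_of_notMem hne, Finset.erase_insert hne]
  · rw [Finset.insert_erase hq, Finset.erase_eq_of_notMem hne]

lemma extP_congr (P' : Finpartition (univ : Finset {x : V // x ≠ v}))
    {q₁ q₂ : Finset {x : V // x ≠ v}} (h : q₁ = q₂) (h₁ : q₁ = ∅ ∨ q₁ ∈ P'.parts)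
    (h₂ : q₂ = ∅ ∨ q₂ ∈ P'.parts) : extP v P' q₁ h₁ = extP v P' q₂ h₂ := by
  subst h; rfl

lemma vdel_part_mem (P : Finpartition (univ : Finset V)) :
    vdel v (P.part v) = ∅ ∨ vdel v (P.part v) ∈ (vres v P).parts := by
  by_cases h : vdel v (P.part v) = ∅
  · exact Or.inl h
  · right
    rw [vres_parts]
    exact Finset.mem_erase.mpr ⟨h, Finset.mem_image_of_mem _ (P.part_mem.mpr (Finset.mem_univ v))⟩

lemma not_mem_of_ne_part {P : Finpartition (univ : Finset V)} {r : Finset V}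
    (hr : r ∈ P.parts) (hrp : r ≠ P.part v) : v ∉ r := fun hvr =>
  hrp (P.part_eq_of_mem hr hvr).symm

lemma vdel_ne_empty_of_ne_part {P : Finpartition (univ : Finset V)} {r : Finset V}
    (hr : r ∈ P.parts) (hrp : r ≠ P.part v) : vdel v r ≠ ∅ := by
  intro h
  obtain ⟨x, hx⟩ := P.nonempty_of_mem_parts hr
  have hxv : x ≠ v := fun hxv => not_mem_of_ne_part hr hrp (hxv ▸ hx)
  have : (⟨x, hxv⟩ : {x : V // x ≠ v}) ∈ vdel v r := mem_vdel.mpr hx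
  rw [h] at this
  exact absurd this (Finset.notMem_empty _)

lemma vres_erase (P : Finpartition (univ : Finset V)) :
    (vres v P).parts.erase (vdel v (P.part v)) = (P.parts.erase (P.part v)).image (vdel v) := by
  have hpart : P.part v ∈ P.parts := P.part_mem.mpr (Finset.mem_univ v)
  ext s
  rw [Finset.mem_erase, vres_parts, Finset.mem_erase, Finset.mem_image]
  simp only [Finset.mem_image, Finset.mem_erase]
  constructor
  · rintro ⟨hsq, hse, r, hr, rfl⟩
    refine ⟨r, ⟨fun hrp => hsq (by rw [hrp]), hr⟩, rfl⟩
  · rintro ⟨r, ⟨hrp, hr⟩, rfl⟩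
    have hvr : v ∉ r := not_mem_of_ne_part hr hrp
    refine ⟨?_, vdel_ne_empty_of_ne_part hr hrp, r, hr, rfl⟩
    intro heq
    obtain ⟨u, hu⟩ := Finset.nonempty_iff_ne_empty.mpr (vdel_ne_empty_of_ne_part hr hrp)
    have hu1 : (↑u : V) ∈ r := mem_vdel.mp hu
    have hu2 : (↑u : V) ∈ P.part v := mem_vdel.mp (heq ▸ hu)
    exact hrp (P.eq_of_mem_parts hr hpart hu1 hu2)

lemma extP_vres (P : Finpartition (univ : Finset V))
    (hq : vdel v (P.part v) = ∅ ∨ vdel v (P.part v) ∈ (vres v P).parts) :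
    extP v (vres v P) (vdel v (P.part v)) hq = P := by
  have hvmem : v ∈ P.part v := P.mem_part (Finset.mem_univ v)
  have hpart : P.part v ∈ P.parts := P.part_mem.mpr (Finset.mem_univ v)
  apply Finpartition.ext
  rw [extP_parts, vlift_vdel_erase, Finset.insert_erase hvmem, vres_erase,
    Finset.image_image]
  have : ∀ r ∈ P.parts.erase (P.part v), (vlift ∘ vdel v) r = r := by
    intro r hr
    obtain ⟨hrp, hr⟩ := Finset.mem_erase.mp hr
    exact vlift_vdel (not_mem_of_ne_part hr hrp)
  rw [Finset.image_congr this, Finset.image_id', Finset.insert_erase hpart]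

section WithG

variable (G : SimpleGraph V) [DecidableRel G.Adj]

lemma adj_deleteVertex {a b : {x : V // x ≠ v}} :
    (deleteVertex G v).Adj a b ↔ G.Adj ↑a ↑b := Iff.rfl

/-- The parts of `P'` that are compatible with `v`. -/
def cps (P' : Finpartition (univ : Finset {x : V // x ≠ v})) :
    Finset (Finset {x : V // x ≠ v}) :=
  P'.parts.filter (fun p => ∀ u ∈ p, ¬ G.Adj ↑u v)

/-- The parts of `P'` that are incompatible with `v`. -/
def ics (P' : Finpartition (univ : Finset {x : V // x ≠ v})) :
    Finset (Finset {x : V // x ≠ v}) :=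
  P'.parts.filter (fun p => ¬ ∀ u ∈ p, ¬ G.Adj ↑u v)

lemma cps_card_add_ics_card (P' : Finpartition (univ : Finset {x : V // x ≠ v})) :
    (cps G P').card + (ics G P').card = P'.parts.card :=
  Finset.card_filter_add_card_filter_not _

lemma isStable_vres {P : Finpartition (univ : Finset V)} (hP : IsStablePartition G P) :
    IsStablePartition (deleteVertex G v) (vres v P) := by
  intro p hp u hu w hw
  rw [vres_parts] at hp
  obtain ⟨r, hr, rfl⟩ := Finset.mem_image.mp (Finset.mem_of_mem_erase hp)
  exact hP r hr _ (mem_vdel.mp hu) _ (mem_vdel.mp hw)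

lemma isStable_extP {P' : Finpartition (univ : Finset {x : V // x ≠ v})}
    (hP' : IsStablePartition (deleteVertex G v) P')
    {q : Finset {x : V // x ≠ v}} (hq : q = ∅ ∨ q ∈ P'.parts)
    (hcq : ∀ u ∈ q, ¬ G.Adj ↑u v) :
    IsStablePartition G (extP v P' q hq) := by
  have key : ∀ r, (r = ∅ ∨ r ∈ P'.parts) → ∀ u ∈ vlift r, ∀ w ∈ vlift r, ¬ G.Adj u w := by
    intro r hr u hu w hw
    obtain ⟨a, ha, rfl⟩ := mem_vlift.mp hu
    obtain ⟨b, hb, rfl⟩ := mem_vlift.mp hw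
    rcases hr with rfl | hr
    · exact absurd ha (Finset.notMem_empty a)
    · exact hP' r hr a ha b hb
  intro p hp u hu w hw
  rw [extP_parts] at hp
  rcases Finset.mem_insert.mp hp with rfl | hp
  · rcases Finset.mem_insert.mp hu with rfl | hu <;>
      rcases Finset.mem_insert.mp hw with rfl | hw
    · exact G.loopless.irrefl _
    · obtain ⟨b, hb, rfl⟩ := mem_vlift.mp hw
      exact fun h => hcq b hb h.symm
    · obtain ⟨a, ha, rfl⟩ := mem_vlift.mp hu
      exact hcq a ha
    · exact key q hq u hu w hw
  · obtain ⟨r, hr, rfl⟩ := Finset.mem_image.mp hp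
    exact key r (Or.inr (Finset.mem_of_mem_erase hr)) u hu w hw

lemma compat_vdel_part {P : Finpartition (univ : Finset V)} (hP : IsStablePartition G P) :
    ∀ u ∈ vdel v (P.part v), ¬ G.Adj ↑u v := fun u hu =>
  hP _ (P.part_mem.mpr (Finset.mem_univ v)) _ (mem_vdel.mp hu) v (P.mem_part (Finset.mem_univ v))

lemma extP_part_v (P' : Finpartition (univ : Finset {x : V // x ≠ v}))
    (q : Finset {x : V // x ≠ v}) (hq : q = ∅ ∨ q ∈ P'.parts) :
    (extP v P' q hq).part v = insert v (vlift q) :=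
  Finpartition.part_eq_of_mem _ (by rw [extP_parts]; exact Finset.mem_insert_self _ _)
    (Finset.mem_insert_self _ _)

/-- The set of choices for extending `P'`. -/
def opts (P' : Finpartition (univ : Finset {x : V // x ≠ v})) :
    Finset (Option (Finset {x : V // x ≠ v})) :=
  insert none ((cps G P').image some)

lemma opts_getD {P' : Finpartition (univ : Finset {x : V // x ≠ v})}
    {c : Option (Finset {x : V // x ≠ v})} (hc : c ∈ opts G P') :
    (c.getD ∅ = ∅ ∨ c.getD ∅ ∈ P'.parts) ∧ (∀ u ∈ c.getD ∅, ¬ G.Adj ↑u v) := by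
  rcases Finset.mem_insert.mp hc with rfl | hc
  · exact ⟨Or.inl rfl, by simp⟩
  · obtain ⟨p, hp, rfl⟩ := Finset.mem_image.mp hc
    obtain ⟨hp1, hp2⟩ := Finset.mem_filter.mp hp
    exact ⟨Or.inr hp1, hp2⟩

lemma fiber_sum (w : ℕ → ℕ) {P' : Finpartition (univ : Finset {x : V // x ≠ v})}
    (hP' : P' ∈ SPF (deleteVertex G v)) :
    ∑ P ∈ (SPF G).filter (fun P => vres v P = P'), w P.parts.card
      = w (P'.parts.card + 1) + (cps G P').card * w P'.parts.card := by
  classical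
  have hstab' : IsStablePartition (deleteVertex G v) P' := mem_SPF.mp hP'
  have hrhs : ∑ c ∈ opts G P',
      (Option.elim c (w (P'.parts.card + 1)) (fun _ => w P'.parts.card))
      = w (P'.parts.card + 1) + (cps G P').card * w P'.parts.card := by
    rw [opts, Finset.sum_insert (by simp), Finset.sum_image
      (fun _ _ _ _ h => Option.some_injective _ h)]
    simp [Finset.sum_const, mul_comm]
  rw [← hrhs]
  symm
  refine Finset.sum_bij' (fun c hc => extP v P' (c.getD ∅) (opts_getD G hc).1)
    (fun P hP => if vdel v (P.part v) = ∅ then none else some (vdel v (P.part v)))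
    ?_ ?_ ?_ ?_ ?_
  · -- maps to fiber
    intro c hc
    rw [Finset.mem_filter]
    exact ⟨mem_SPF.mpr (isStable_extP G hstab' _ (opts_getD G hc).2), vres_extP _ _ _⟩
  · -- maps to opts
    intro P hP
    obtain ⟨hPs, hPr⟩ := Finset.mem_filter.mp hP
    by_cases h : vdel v (P.part v) = ∅
    · rw [if_pos h]; exact Finset.mem_insert_self _ _
    · rw [if_neg h]
      refine Finset.mem_insert_of_mem (Finset.mem_image_of_mem _ ?_)
      rw [cps, Finset.mem_filter]
      constructor
      · rw [← hPr]
        rcases vdel_part_mem P with he | hm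
        · exact absurd he h
        · exact hm
      · exact compat_vdel_part G (mem_SPF.mp hPs)
  · -- left inverse
    intro c hc
    have hpv : vdel v ((extP v P' (c.getD ∅) (opts_getD G hc).1).part v) = c.getD ∅ := by
      rw [extP_part_v, vdel_insert_self, vdel_vlift]
    rw [hpv]
    rcases Finset.mem_insert.mp hc with rfl | hcm
    · simp
    · obtain ⟨p, hp, rfl⟩ := Finset.mem_image.mp hcm
      rw [Option.getD_some, if_neg (show ¬ p = ∅ by
        simpa using P'.ne_bot (Finset.mem_filter.mp hp).1)]
  · -- right inverse
    intro P hP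
    obtain ⟨hPs, hPr⟩ := Finset.mem_filter.mp hP
    subst hPr
    have hgd : (if vdel v (P.part v) = ∅ then (none : Option (Finset {x : V // x ≠ v}))
        else some (vdel v (P.part v))).getD ∅ = vdel v (P.part v) := by
      split_ifs with h
      · rw [Option.getD_none, h]
      · rw [Option.getD_some]
    rw [extP_congr _ hgd _ (vdel_part_mem P)]
    exact extP_vres P _
  · -- values agree
    intro c hc
    rcases Finset.mem_insert.mp hc with rfl | hcm
    · simp only [Option.elim_none]
      congr 1
      exact (extP_parts_card_none P' _).symm
    · obtain ⟨p, hp, rfl⟩ := Finset.mem_image.mp hcm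
      simp only [Option.elim_some]
      congr 1
      exact (extP_parts_card_some P' p (Finset.mem_filter.mp hp).1 _).symm

lemma colB_split :
    colB G = ∑ P' ∈ SPF (deleteVertex G v), (1 + (cps G P').card) := by
  classical
  rw [colB_eq]
  rw [Finset.card_eq_sum_card_fiberwise (f := vres v) (t := SPF (deleteVertex G v))
    (fun P hP => mem_SPF.mpr (isStable_vres G (mem_SPF.mp hP)))]
  refine Finset.sum_congr rfl fun P' hP' => ?_
  rw [Finset.card_eq_sum_ones]
  simpa using fiber_sum G (fun _ => 1) hP'

lemma colT_split :
    colT G = ∑ P' ∈ SPF (deleteVertex G v),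
      (P'.parts.card + 1 + (cps G P').card * P'.parts.card) := by
  classical
  rw [colT_eq]
  rw [← Finset.sum_fiberwise_of_maps_to (g := vres v)
    (fun P hP => mem_SPF.mpr (isStable_vres G (mem_SPF.mp hP)))
    (fun P : Finpartition (univ : Finset V) => P.parts.card)]
  refine Finset.sum_congr rfl fun P' hP' => ?_
  rw [fiber_sum G (fun n => n) hP']

lemma ics_card_le_degree (P' : Finpartition (univ : Finset {x : V // x ≠ v})) :
    (ics G P').card ≤ G.degree v := by
  classical
  rw [← SimpleGraph.card_neighborFinset_eq_degree]
  apply Finset.card_le_card_of_injOn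
    (fun p => if h : ∃ u : {x : V // x ≠ v}, u ∈ p ∧ G.Adj ↑u v then (↑h.choose : V) else v)
  · intro p hp
    have h : ∃ u ∈ p, G.Adj ↑u v := by
      have := (Finset.mem_filter.mp hp).2
      push_neg at this
      exact this
    dsimp only
    rw [dif_pos h, Finset.mem_coe, SimpleGraph.mem_neighborFinset]
    exact h.choose_spec.2.symm
  · intro p₁ hp₁ p₂ hp₂ heq
    rw [Finset.mem_coe] at hp₁ hp₂
    have h₁ : ∃ u ∈ p₁, G.Adj ↑u v := by
      have := (Finset.mem_filter.mp hp₁).2; push_neg at this; exact this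
    have h₂ : ∃ u ∈ p₂, G.Adj ↑u v := by
      have := (Finset.mem_filter.mp hp₂).2; push_neg at this; exact this
    dsimp only at heq
    rw [dif_pos h₁, dif_pos h₂] at heq
    have hch : h₁.choose = h₂.choose := Subtype.coe_injective heq
    by_contra hne
    have hd := P'.disjoint (Finset.mem_filter.mp hp₁).1 (Finset.mem_filter.mp hp₂).1 hne
    exact Finset.disjoint_left.mp hd h₁.choose_spec.1 (hch ▸ h₂.choose_spec.1)

lemma degree_le_ics
    (hχ : ((G.degree v : ℕ∞)) ≤ (G.induce (G.neighborSet v)).chromaticNumber + 3)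
    {P' : Finpartition (univ : Finset {x : V // x ≠ v})}
    (hP' : IsStablePartition (deleteVertex G v) P') :
    G.degree v ≤ (ics G P').card + 3 := by
  classical
  have hsub : ∀ w : ↥(G.neighborSet v), (↑w : V) ≠ v := by
    intro w h
    have hw := w.prop
    rw [SimpleGraph.mem_neighborSet, h] at hw
    exact G.loopless.irrefl v hw
  have hmem : ∀ w : ↥(G.neighborSet v),
      P'.part ⟨↑w, hsub w⟩ ∈ ics G P' := by
    intro w
    rw [ics, Finset.mem_filter]
    refine ⟨P'.part_mem.mpr (Finset.mem_univ _), ?_⟩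
    push_neg
    refine ⟨⟨↑w, hsub w⟩, P'.mem_part (Finset.mem_univ _), ?_⟩
    have hw := w.prop
    rw [SimpleGraph.mem_neighborSet] at hw
    exact hw.symm
  have C : (G.induce (G.neighborSet v)).Coloring ↥(ics G P') := by
    refine SimpleGraph.Coloring.mk (fun w => ⟨P'.part ⟨↑w, hsub w⟩, hmem w⟩) ?_
    intro w₁ w₂ hadj heq
    have hadj' : G.Adj ↑w₁ ↑w₂ := hadj
    have heq' : P'.part ⟨↑w₁, hsub w₁⟩ = P'.part ⟨↑w₂, hsub w₂⟩ :=
      congrArg Subtype.val heq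
    have h1 : (⟨↑w₁, hsub w₁⟩ : {x : V // x ≠ v}) ∈ P'.part ⟨↑w₁, hsub w₁⟩ :=
      P'.mem_part (Finset.mem_univ _)
    have h2 : (⟨↑w₂, hsub w₂⟩ : {x : V // x ≠ v}) ∈ P'.part ⟨↑w₁, hsub w₁⟩ := by
      rw [heq']; exact P'.mem_part (Finset.mem_univ _)
    exact hP' _ (P'.part_mem.mpr (Finset.mem_univ _)) _ h1 _ h2 hadj'
  have hcol : (G.induce (G.neighborSet v)).Colorable ((ics G P').card) := by
    simpa using C.colorable
  have hle := hcol.chromaticNumber_le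
  have h2 : (G.degree v : ℕ∞) ≤ (((ics G P').card + 3 : ℕ) : ℕ∞) := by
    calc (G.degree v : ℕ∞) ≤ (G.induce (G.neighborSet v)).chromaticNumber + 3 := hχ
      _ ≤ ((ics G P').card : ℕ∞) + 3 := by gcongr
      _ = (((ics G P').card + 3 : ℕ) : ℕ∞) := by push_cast; ring
  exact_mod_cast h2

end WithG

lemma bot_stable (G : SimpleGraph V) :
    IsStablePartition G (⊥ : Finpartition (univ : Finset V)) := by
  intro p hp u hu w hw
  rw [Finpartition.parts_bot, Finset.mem_map] at hp
  obtain ⟨a, _, rfl⟩ := hp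
  simp only [Function.Embedding.coeFn_mk, Finset.mem_singleton] at hu hw
  subst hu; subst hw
  exact G.loopless.irrefl _

end Main

lemma quad_nonneg (a e : ℤ) (h1 : -3 ≤ e) (h2 : e ≤ 3) : 0 ≤ a * (a - e) + 2 := by
  have habs : a * e ≤ 3 * |a| := by
    calc a * e ≤ |a * e| := le_abs_self _
      _ = |a| * |e| := abs_mul a e
      _ ≤ |a| * 3 := mul_le_mul_of_nonneg_left (abs_le.mpr ⟨h1, h2⟩) (abs_nonneg a)
      _ = 3 * |a| := mul_comm _ _
  have h4 : 0 ≤ (|a| - 1) * (|a| - 2) := by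
    rcases le_or_gt (|a|) 1 with h | h
    · nlinarith [mul_nonneg (show (0:ℤ) ≤ 1 - |a| by linarith)
        (show (0:ℤ) ≤ 2 - |a| by linarith)]
    · have h5 : 1 + 1 ≤ |a| := Int.add_one_le_iff.mpr h
      exact mul_nonneg (by linarith) (by linarith)
  nlinarith [sq_abs a, habs, h4]

lemma double_sum_pos {α : Type*} [DecidableEq α] (s : Finset α) (hs : s.Nonempty)
    (g : α → α → ℤ) (hdiag : ∀ x ∈ s, g x x = 1)
    (hpair : ∀ x ∈ s, ∀ y ∈ s, 0 ≤ g x y + g y x) :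
    0 < ∑ x ∈ s, ∑ y ∈ s, g x y := by
  have hswap : (∑ x ∈ s, ∑ y ∈ s, g x y) = ∑ x ∈ s, ∑ y ∈ s, g y x := Finset.sum_comm
  have h2 : 2 * (∑ x ∈ s, ∑ y ∈ s, g x y) = ∑ x ∈ s, ∑ y ∈ s, (g x y + g y x) := by
    rw [two_mul]
    nth_rewrite 2 [hswap]
    rw [← Finset.sum_add_distrib]
    exact Finset.sum_congr rfl fun x _ => (Finset.sum_add_distrib).symm
  have hge : ∑ x ∈ s, (2:ℤ) ≤ ∑ x ∈ s, ∑ y ∈ s, (g x y + g y x) := by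
    apply Finset.sum_le_sum
    intro x hx
    calc (2:ℤ) = g x x + g x x := by rw [hdiag x hx]; norm_num
      _ ≤ ∑ y ∈ s, (g x y + g y x) :=
        Finset.single_le_sum (fun y hy => hpair x hx y hy) hx
  have hcard : (0:ℤ) < ∑ x ∈ s, (2:ℤ) := by
    rw [Finset.sum_const, nsmul_eq_mul]
    have := Finset.card_pos.mpr hs
    positivity
  linarith

theorem stmt4 {V : Type*} [Fintype V] [DecidableEq V] (G : SimpleGraph V) [DecidableRel G.Adj]
    (v : V)
    (hχ : ((G.degree v : ℕ∞)) ≤ (G.induce (G.neighborSet v)).chromaticNumber + 3) :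
    colA G > colA (deleteVertex G v) := by
  classical
  have hbotG : (⊥ : Finpartition (univ : Finset V)) ∈ SPF G := mem_SPF.mpr (bot_stable G)
  have hbotG' : (⊥ : Finpartition (univ : Finset {x : V // x ≠ v})) ∈ SPF (deleteVertex G v) :=
    mem_SPF.mpr (bot_stable _)
  have hBpos : 0 < colB G := by
    rw [colB_eq]; exact Finset.card_pos.mpr ⟨⊥, hbotG⟩
  have hB'pos : 0 < colB (deleteVertex G v) := by
    rw [colB_eq]; exact Finset.card_pos.mpr ⟨⊥, hbotG'⟩
  have hT : (colT G : ℤ) = ∑ P' ∈ SPF (deleteVertex G v),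
      ((P'.parts.card : ℤ) + 1 + (P'.parts.card : ℤ) * ((cps G P').card : ℤ)) := by
    rw [colT_split (v := v) G]
    push_cast
    exact Finset.sum_congr rfl fun P' _ => by ring
  have hB : (colB G : ℤ) = ∑ P' ∈ SPF (deleteVertex G v),
      (1 + ((cps G P').card : ℤ)) := by
    rw [colB_split (v := v) G]
    push_cast
    rfl
  have hT' : (colT (deleteVertex G v) : ℤ) = ∑ P' ∈ SPF (deleteVertex G v),
      ((P'.parts.card : ℤ)) := by
    rw [colT_eq]
    push_cast
    rfl
  have hB' : (colB (deleteVertex G v) : ℤ) = ∑ P' ∈ SPF (deleteVertex G v), (1 : ℤ) := by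
    rw [colB_eq, Finset.card_eq_sum_ones]
    push_cast
    rfl
  have hbound : ∀ P' ∈ SPF (deleteVertex G v),
      (P'.parts.card : ℤ) - ((cps G P').card : ℤ) ≤ (G.degree v : ℤ) ∧
      (G.degree v : ℤ) - 3 ≤ (P'.parts.card : ℤ) - ((cps G P').card : ℤ) := by
    intro P' hP'
    have hsum := cps_card_add_ics_card G P'
    have h1 := ics_card_le_degree G P'
    have h2 := degree_le_ics G hχ (mem_SPF.mp hP')
    have hsZ : ((cps G P').card : ℤ) + ((ics G P').card : ℤ) = (P'.parts.card : ℤ) := by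
      exact_mod_cast hsum
    have h1Z : ((ics G P').card : ℤ) ≤ (G.degree v : ℤ) := by exact_mod_cast h1
    have h2Z : (G.degree v : ℤ) ≤ ((ics G P').card : ℤ) + 3 := by exact_mod_cast h2
    constructor <;> linarith
  have hpos : (0:ℤ) < ∑ x ∈ SPF (deleteVertex G v), ∑ y ∈ SPF (deleteVertex G v),
      (((x.parts.card : ℤ) - (y.parts.card : ℤ)) * (1 + ((cps G x).card : ℤ)) + 1) := by
    apply double_sum_pos _ ⟨⊥, hbotG'⟩
    · intro x hx
      ring
    · intro x hx y hy
      obtain ⟨hx1, hx2⟩ := hbound x hx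
      obtain ⟨hy1, hy2⟩ := hbound y hy
      have hq := quad_nonneg ((x.parts.card : ℤ) - (y.parts.card : ℤ))
        (((x.parts.card : ℤ) - ((cps G x).card : ℤ))
          - ((y.parts.card : ℤ) - ((cps G y).card : ℤ)))
        (by linarith) (by linarith)
      calc (0:ℤ) ≤ _ := hq
        _ = _ := by ring
  have expand : (colT G : ℤ) * colB (deleteVertex G v) - colT (deleteVertex G v) * colB G
      = ∑ x ∈ SPF (deleteVertex G v), ∑ y ∈ SPF (deleteVertex G v),
        (((x.parts.card : ℤ) - (y.parts.card : ℤ)) * (1 + ((cps G x).card : ℤ)) + 1) := by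
    rw [hT, hB, hT', hB']
    rw [Finset.sum_mul_sum, Finset.sum_mul_sum]
    rw [show (∑ x ∈ SPF (deleteVertex G v), ∑ y ∈ SPF (deleteVertex G v),
        ((x.parts.card : ℤ)) * (1 + ((cps G y).card : ℤ)))
      = ∑ x ∈ SPF (deleteVertex G v), ∑ y ∈ SPF (deleteVertex G v),
        ((y.parts.card : ℤ)) * (1 + ((cps G x).card : ℤ)) from Finset.sum_comm]
    rw [← Finset.sum_sub_distrib]
    refine Finset.sum_congr rfl fun x hx => ?_
    rw [← Finset.sum_sub_distrib]
    exact Finset.sum_congr rfl fun y hy => by ring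
  have hkey : (colT (deleteVertex G v) : ℤ) * colB G < (colT G : ℤ) * colB (deleteVertex G v) := by
    linarith [expand ▸ hpos]
  rw [gt_iff_lt, colA, colA, div_lt_div_iff₀ (by exact_mod_cast hB'pos) (by exact_mod_cast hBpos)]
  exact_mod_cast hkey
end

section
/- For the path P_n on n ≥ 1 vertices, A(P_n) = B_n / B_{n−1}, where B_m is the mth Bell number (with B_0 = 1). -/
open Finset

/-- The `n`th Bell number: the number of partitions of an `n`-element set. -/
noncomputable def bell (n : ℕ) : ℕ :=
  Nat.card (Finpartition (Finset.univ : Finset (Fin n)))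

section SuccDev

open Relation

variable {α : Type*} [Fintype α] [LinearOrder α] [DecidableEq α]

/-- Successor-function encodings of partitions: each element optionally points to the next
element of its block. -/
def IsSuccF (s : α → Option α) : Prop :=
  (∀ a b, s a = some b → a < b) ∧ ∀ a a' b, s a = some b → s a' = some b → a = a'

/-- The successor function of a partition. -/
noncomputable def psucc (P : Finpartition (Finset.univ : Finset α)) (a : α) : Option α :=
  if h : ((P.part a).filter (a < ·)).Nonempty then
    some (((P.part a).filter (a < ·)).min' h) else none

lemma psucc_eq_some_iff {P : Finpartition (Finset.univ : Finset α)} {a b : α} :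
    psucc P a = some b ↔ b ∈ P.part a ∧ a < b ∧ ∀ c ∈ P.part a, a < c → b ≤ c := by
  unfold psucc
  split_ifs with h
  · simp only [Option.some.injEq]
    constructor
    · rintro rfl
      have hmem := Finset.min'_mem _ h
      rw [Finset.mem_filter] at hmem
      exact ⟨hmem.1, hmem.2, fun c hc hac => Finset.min'_le _ _ (Finset.mem_filter.2 ⟨hc, hac⟩)⟩
    · rintro ⟨hb, hab, hmin⟩
      have h1 : ((P.part a).filter (a < ·)).min' h ∈ (P.part a).filter (a < ·) :=
        Finset.min'_mem _ h
      rw [Finset.mem_filter] at h1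
      exact le_antisymm (Finset.min'_le _ _ (Finset.mem_filter.2 ⟨hb, hab⟩)) (hmin _ h1.1 h1.2)
  · simp only [false_iff, not_and]
    intro hb hab
    exact absurd ⟨b, Finset.mem_filter.2 ⟨hb, hab⟩⟩ h

lemma psucc_eq_none_iff {P : Finpartition (Finset.univ : Finset α)} {a : α} :
    psucc P a = none ↔ ∀ c ∈ P.part a, ¬ a < c := by
  unfold psucc
  split_ifs with h
  · simp only [false_iff, not_forall]
    obtain ⟨c, hc⟩ := h
    rw [Finset.mem_filter] at hc
    exact ⟨c, hc.1, not_not.2 hc.2⟩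
  · simp only [true_iff]
    intro c hc hac
    exact h ⟨c, Finset.mem_filter.2 ⟨hc, hac⟩⟩

lemma psucc_isSuccF (P : Finpartition (Finset.univ : Finset α)) : IsSuccF (psucc P) := by
  constructor
  · intro a b hab
    exact (psucc_eq_some_iff.1 hab).2.1
  · intro a a' b ha ha'
    obtain ⟨hb, hab, hmin⟩ := psucc_eq_some_iff.1 ha
    obtain ⟨hb', hab', hmin'⟩ := psucc_eq_some_iff.1 ha'
    have hpa : P.part b = P.part a :=
      (P.mem_part_iff_part_eq_part (Finset.mem_univ _) (Finset.mem_univ _)).1 hb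
    have hpa' : P.part b = P.part a' :=
      (P.mem_part_iff_part_eq_part (Finset.mem_univ _) (Finset.mem_univ _)).1 hb'
    by_contra hne
    rcases lt_trichotomy a a' with hlt | heq | hlt
    · have ha'mem : a' ∈ P.part a := by
        rw [P.mem_part_iff_part_eq_part (Finset.mem_univ _) (Finset.mem_univ _),
          ← hpa', hpa]
      exact absurd (hmin a' ha'mem hlt) (not_le.2 hab')
    · exact hne heq
    · have hamem : a ∈ P.part a' := by
        rw [P.mem_part_iff_part_eq_part (Finset.mem_univ _) (Finset.mem_univ _),
          ← hpa, hpa']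
      exact absurd (hmin' a hamem hlt) (not_le.2 hab)

/-- Reachability along a successor function. -/
def SReach (s : α → Option α) : α → α → Prop :=
  Relation.ReflTransGen (fun a b => s a = some b)

lemma sreach_le {s : α → Option α} (hs : IsSuccF s) {a b : α} (h : SReach s a b) : a ≤ b := by
  induction h with
  | refl => exact le_refl _
  | tail _ hcb ih => exact ih.trans (hs.1 _ _ hcb).le

lemma sreach_total_down {s : α → Option α} (hs : IsSuccF s) {a b c : α}
    (hac : SReach s a c) (hbc : SReach s b c) : SReach s a b ∨ SReach s b a := by
  induction hac using Relation.ReflTransGen.head_induction_on with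
  | refl => exact Or.inr hbc
  | head hstep _ ih =>
    rename_i x x1 _
    rcases ih with h | h
    · exact Or.inl (Relation.ReflTransGen.head hstep h)
    · rcases Relation.ReflTransGen.cases_tail h with rfl | ⟨p, hbp, hp⟩
      · exact Or.inl (Relation.ReflTransGen.single hstep)
      · have : p = x := hs.2 _ _ _ hp hstep
        subst this
        exact Or.inr hbp

lemma sreach_total_up {s : α → Option α} (hs : IsSuccF s) {a b c : α}
    (hba : SReach s b a) (hbc : SReach s b c) : SReach s a c ∨ SReach s c a := by
  revert hbc
  induction hba using Relation.ReflTransGen.head_induction_on with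
  | refl => exact fun hbc => Or.inl hbc
  | head hstep htail ih =>
    rename_i x x1
    intro hxc
    rcases Relation.ReflTransGen.cases_head hxc with rfl | ⟨y, hxy, hyc⟩
    · exact Or.inr (Relation.ReflTransGen.head hstep htail)
    · have : y = x1 := by rw [hstep] at hxy; exact (Option.some_inj.1 hxy).symm
      subst this
      exact ih hyc

/-- The setoid induced by a successor function. -/
def succSetoid (s : α → Option α) (hs : IsSuccF s) : Setoid α where
  r a b := SReach s a b ∨ SReach s b a
  iseqv := by
    constructor
    · intro a; exact Or.inl Relation.ReflTransGen.refl
    · intro a b h; exact h.symm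
    · rintro a b c (hab | hba) (hbc | hcb)
      · exact Or.inl (hab.trans hbc)
      · exact sreach_total_down hs hab hcb
      · rcases sreach_total_up hs hba hbc with h | h
        · exact Or.inl h
        · exact Or.inr h
      · exact Or.inr (hcb.trans hba)

/-- The partition induced by a successor function. -/
noncomputable def ofSucc (s : α → Option α) (hs : IsSuccF s) :
    Finpartition (Finset.univ : Finset α) :=
  @Finpartition.ofSetoid α _ _ (succSetoid s hs) (Classical.decRel _)

lemma mem_part_ofSucc {s : α → Option α} (hs : IsSuccF s) {a b : α} :
    b ∈ (ofSucc s hs).part a ↔ SReach s a b ∨ SReach s b a := by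
  unfold ofSucc
  exact @Finpartition.mem_part_ofSetoid_iff_rel α _ a _ (succSetoid s hs) (Classical.decRel _) b

lemma psucc_ofSucc {s : α → Option α} (hs : IsSuccF s) : psucc (ofSucc s hs) = s := by
  funext a
  rcases h : s a with _ | b
  · rw [psucc_eq_none_iff]
    intro c hc hac
    rcases (mem_part_ofSucc hs).1 hc with hr | hr
    · rcases Relation.ReflTransGen.cases_head hr with rfl | ⟨y, hxy, _⟩
      · exact lt_irrefl _ hac
      · rw [h] at hxy; exact absurd hxy (by simp)
    · exact absurd (sreach_le hs hr) (not_le.2 hac)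
  · rw [psucc_eq_some_iff]
    refine ⟨(mem_part_ofSucc hs).2 (Or.inl (Relation.ReflTransGen.single h)), hs.1 _ _ h, ?_⟩
    intro c hc hac
    rcases (mem_part_ofSucc hs).1 hc with hr | hr
    · rcases Relation.ReflTransGen.cases_head hr with rfl | ⟨y, hxy, hyc⟩
      · exact absurd hac (lt_irrefl _)
      · rw [h] at hxy
        have : y = b := (Option.some.injEq _ _ ▸ hxy).symm
        subst this
        exact sreach_le hs hyc
    · exact absurd (sreach_le hs hr) (not_le.2 hac)

lemma sreach_of_mem_part (P : Finpartition (Finset.univ : Finset α)) :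
    ∀ (k : ℕ) (a b : α), (Finset.univ.filter (a < ·)).card ≤ k → b ∈ P.part a → a ≤ b →
      SReach (psucc P) a b := by
  intro k
  induction k with
  | zero =>
    intro a b hk hb hab
    rcases eq_or_lt_of_le hab with rfl | hlt
    · exact Relation.ReflTransGen.refl
    · exact absurd hk (by
        simp only [not_le, Finset.card_pos]
        exact ⟨b, Finset.mem_filter.2 ⟨Finset.mem_univ _, hlt⟩⟩)
  | succ k ih =>
    intro a b hk hb hab
    rcases eq_or_lt_of_le hab with rfl | hlt
    · exact Relation.ReflTransGen.refl
    · rcases hm : psucc P a with _ | m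
      · exact absurd hlt (psucc_eq_none_iff.1 hm b hb)
      · obtain ⟨hmmem, ham, hmin⟩ := psucc_eq_some_iff.1 hm
        have hpart : P.part m = P.part a :=
          (P.mem_part_iff_part_eq_part (Finset.mem_univ _) (Finset.mem_univ _)).1 hmmem
        have hbm : b ∈ P.part m := by rw [hpart]; exact hb
        have hmb : m ≤ b := hmin b hb hlt
        have hcard : (Finset.univ.filter (m < ·)).card ≤ k := by
          have hss : Finset.univ.filter (m < ·) ⊂ Finset.univ.filter (a < ·) := by
            constructor
            · intro x hx
              rw [Finset.mem_filter] at *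
              exact ⟨hx.1, ham.trans hx.2⟩
            · intro hcon
              have := hcon (Finset.mem_filter.2 ⟨Finset.mem_univ m, ham⟩)
              rw [Finset.mem_filter] at this
              exact lt_irrefl _ this.2
          have := Finset.card_lt_card hss
          omega
        exact Relation.ReflTransGen.head hm (ih m b hcard hbm hmb)

lemma mem_part_iff_sreach (P : Finpartition (Finset.univ : Finset α)) {a b : α} :
    b ∈ P.part a ↔ SReach (psucc P) a b ∨ SReach (psucc P) b a := by
  constructor
  · intro hb
    rcases le_total a b with hab | hba
    · exact Or.inl (sreach_of_mem_part P _ a b le_rfl hb hab)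
    · refine Or.inr (sreach_of_mem_part P _ b a le_rfl ?_ hba)
      rw [P.mem_part_iff_part_eq_part (Finset.mem_univ _) (Finset.mem_univ _)] at hb ⊢
      exact hb.symm
  · have key : ∀ x y : α, SReach (psucc P) x y → y ∈ P.part x := by
      intro x y h
      induction h with
      | refl => exact P.mem_part (Finset.mem_univ _)
      | tail hxc hcy ih =>
        rename_i c d
        have hd := (psucc_eq_some_iff.1 hcy).1
        have : P.part c = P.part x :=
          (P.mem_part_iff_part_eq_part (Finset.mem_univ _) (Finset.mem_univ _)).1 ih
        rw [← this]; exact hd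
    rintro (h | h)
    · exact key _ _ h
    · have := key _ _ h
      rw [P.mem_part_iff_part_eq_part (Finset.mem_univ _) (Finset.mem_univ _)] at this ⊢
      exact this.symm

lemma Finpartition.eq_of_part_iff {P Q : Finpartition (Finset.univ : Finset α)}
    (h : ∀ a b : α, b ∈ P.part a ↔ b ∈ Q.part a) : P = Q := by
  ext p
  have key : ∀ (R S : Finpartition (Finset.univ : Finset α)),
      (∀ a b : α, b ∈ R.part a ↔ b ∈ S.part a) → ∀ p ∈ R.parts, p ∈ S.parts := by
    intro R S hRS p hp
    obtain ⟨a, ha⟩ := R.nonempty_of_mem_parts hp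
    have hpa : R.part a = p := R.part_eq_of_mem hp ha
    have : R.part a = S.part a := Finset.ext fun b => hRS a b
    rw [← hpa, this]
    exact S.part_mem.2 (Finset.mem_univ _)
  exact ⟨key P Q h p, key Q P (fun a b => (h a b).symm) p⟩

lemma ofSucc_psucc (P : Finpartition (Finset.univ : Finset α)) :
    ofSucc (psucc P) (psucc_isSuccF P) = P := by
  apply Finpartition.eq_of_part_iff
  intro a b
  rw [mem_part_ofSucc, ← mem_part_iff_sreach]

/-- The equivalence between partitions and successor functions. -/
noncomputable def partSuccEquiv :
    Finpartition (Finset.univ : Finset α) ≃ {s : α → Option α // IsSuccF s} where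
  toFun P := ⟨psucc P, psucc_isSuccF P⟩
  invFun t := ofSucc t.1 t.2
  left_inv P := ofSucc_psucc P
  right_inv t := Subtype.ext (psucc_ofSucc t.2)

lemma card_parts_eq_nones (P : Finpartition (Finset.univ : Finset α)) :
    P.parts.card = (Finset.univ.filter fun a => psucc P a = none).card := by
  classical
  apply Finset.card_bij (fun p hp => p.max' (P.nonempty_of_mem_parts hp))
  · intro p hp
    rw [Finset.mem_filter]
    refine ⟨Finset.mem_univ _, ?_⟩
    rw [psucc_eq_none_iff]
    have hmax : p.max' (P.nonempty_of_mem_parts hp) ∈ p := Finset.max'_mem _ _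
    have : P.part (p.max' (P.nonempty_of_mem_parts hp)) = p := P.part_eq_of_mem hp hmax
    rw [this]
    intro c hc
    exact not_lt.2 (Finset.le_max' _ _ hc)
  · intro p hp q hq heq
    have h1 : p.max' (P.nonempty_of_mem_parts hp) ∈ p := Finset.max'_mem _ _
    have h2 : q.max' (P.nonempty_of_mem_parts hq) ∈ q := Finset.max'_mem _ _
    rw [heq] at h1
    exact P.eq_of_mem_parts hp hq h1 h2
  · intro a ha
    rw [Finset.mem_filter] at ha
    refine ⟨P.part a, P.part_mem.2 (Finset.mem_univ _), ?_⟩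
    have hmax : (P.part a).max' ⟨a, P.mem_part (Finset.mem_univ _)⟩ ∈ P.part a :=
      Finset.max'_mem _ _
    have h1 : ¬ a < (P.part a).max' ⟨a, P.mem_part (Finset.mem_univ _)⟩ :=
      psucc_eq_none_iff.1 ha.2 _ hmax
    have h2 : a ≤ (P.part a).max' ⟨a, P.mem_part (Finset.mem_univ _)⟩ :=
      Finset.le_max' _ _ (P.mem_part (Finset.mem_univ _))
    exact (le_antisymm (not_lt.1 h1) h2)

end SuccDev

section FinDev

variable {m : ℕ}

/-- Stability of a successor function on `Fin (m+1)` w.r.t. the path graph. -/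
def SStable (s : Fin (m+1) → Option (Fin (m+1))) : Prop :=
  ∀ a b, s a = some b → (a : ℕ) + 1 < (b : ℕ)

lemma stable_iff (P : Finpartition (Finset.univ : Finset (Fin (m+1)))) :
    IsStablePartition (SimpleGraph.pathGraph (m+1)) P ↔ SStable (psucc P) := by
  constructor
  · intro h a b hab
    obtain ⟨hb, hlt, -⟩ := psucc_eq_some_iff.1 hab
    have hadj := h (P.part a) (P.part_mem.2 (Finset.mem_univ _)) a
      (P.mem_part (Finset.mem_univ _)) b hb
    rw [SimpleGraph.pathGraph_adj] at hadj
    push_neg at hadj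
    have hlt' : (a : ℕ) < b := hlt
    omega
  · intro hs p hp u hu v hv hadj
    rw [SimpleGraph.pathGraph_adj] at hadj
    have key : ∀ x y : Fin (m+1), x ∈ p → y ∈ p → (x : ℕ) + 1 = (y : ℕ) → False := by
      intro x y hx hy hxy
      have hxy' : x < y := by rw [Fin.lt_def]; omega
      have hpx : P.part x = p := P.part_eq_of_mem hp hx
      have hyp : y ∈ P.part x := by rw [hpx]; exact hy
      rcases hm : psucc P x with _ | w
      · exact absurd hxy' (psucc_eq_none_iff.1 hm y hyp)
      · obtain ⟨-, hxw, hmin⟩ := psucc_eq_some_iff.1 hm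
        have h1 := hmin y hyp hxy'
        have h2 := hs x w hm
        rw [Fin.lt_def] at hxw
        rw [Fin.le_def] at h1
        omega
    rcases hadj with h1 | h1
    · exact key u v hu hv h1
    · exact key v u hv hu h1

/-- Extending a successor function on `Fin m` to a stable one on `Fin (m+1)`. -/
def grow (s' : Fin m → Option (Fin m)) (a : Fin (m + 1)) : Option (Fin (m + 1)) :=
  if h : (a : ℕ) < m then (s' ⟨a, h⟩).map Fin.succ else none

/-- Shrinking a stable successor function on `Fin (m+1)` to one on `Fin m`. -/
def shrink (s : Fin (m + 1) → Option (Fin (m + 1))) (a' : Fin m) : Option (Fin m) :=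
  (s a'.castSucc).bind fun b =>
    if h : 0 < (b : ℕ) then some ⟨(b : ℕ) - 1, by have := b.isLt; omega⟩ else none

lemma grow_eq_some_iff {s' : Fin m → Option (Fin m)} {a : Fin (m+1)} {b : Fin (m+1)} :
    grow s' a = some b ↔ ∃ (h : (a : ℕ) < m) (b' : Fin m), s' ⟨a, h⟩ = some b' ∧ b = b'.succ := by
  unfold grow
  split_ifs with h
  · cases hs : s' ⟨a, h⟩ <;> simp [hs, h, eq_comm]
  · simp [h]

lemma grow_isSuccF {s' : Fin m → Option (Fin m)} (hs' : IsSuccF s') : IsSuccF (grow s') := by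
  constructor
  · intro a b hab
    obtain ⟨h, b', hb', rfl⟩ := grow_eq_some_iff.1 hab
    have h3 : (a : ℕ) < (b' : ℕ) := hs'.1 _ _ hb'
    rw [Fin.lt_def]
    simp only [Fin.val_succ]
    omega
  · intro a c b ha hc
    obtain ⟨h1, b1, hb1, rfl⟩ := grow_eq_some_iff.1 ha
    obtain ⟨h2, b2, hb2, heq⟩ := grow_eq_some_iff.1 hc
    have hb12 : b2 = b1 := Fin.succ_inj.1 heq.symm
    subst hb12
    have hac := hs'.2 _ _ _ hb1 hb2
    exact Fin.ext (by simpa using hac)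

lemma grow_sstable {s' : Fin m → Option (Fin m)} (hs' : IsSuccF s') : SStable (grow s') := by
  intro a b hab
  obtain ⟨h, b', hb', rfl⟩ := grow_eq_some_iff.1 hab
  have h3 : (a : ℕ) < (b' : ℕ) := hs'.1 _ _ hb'
  simp only [Fin.val_succ]
  omega

lemma shrink_eq_some_iff {s : Fin (m+1) → Option (Fin (m+1))} {a' : Fin m} {c : Fin m} :
    shrink s a' = some c ↔ ∃ b : Fin (m+1), s a'.castSucc = some b ∧ 0 < (b : ℕ) ∧
      (c : ℕ) = (b : ℕ) - 1 := by
  unfold shrink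
  cases hs : s a'.castSucc with
  | none => simp
  | some b =>
    simp only [Option.bind_some]
    constructor
    · intro h
      rcases Nat.eq_zero_or_pos (b : ℕ) with h0 | h0
      · rw [dif_neg (by omega)] at h
        exact absurd h (by simp)
      · rw [dif_pos h0] at h
        obtain rfl := Option.some_inj.1 h
        exact ⟨b, rfl, h0, by simp⟩
    · rintro ⟨b2, hb2, h0, hc⟩
      obtain rfl : b = b2 := Option.some_inj.1 hb2
      rw [dif_pos h0]
      exact congrArg some (Fin.ext hc.symm)

lemma shrink_isSuccF {s : Fin (m+1) → Option (Fin (m+1))} (hs : IsSuccF s) (hst : SStable s) :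
    IsSuccF (shrink s) := by
  constructor
  · intro a' c h
    obtain ⟨b, hb, h0, hc⟩ := shrink_eq_some_iff.1 h
    have := hst _ _ hb
    rw [Fin.lt_def]
    simp only [Fin.coe_castSucc] at this
    omega
  · intro a' c' c ha hc
    obtain ⟨b1, hb1, h01, hc1⟩ := shrink_eq_some_iff.1 ha
    obtain ⟨b2, hb2, h02, hc2⟩ := shrink_eq_some_iff.1 hc
    have hb12 : b1 = b2 := Fin.ext (by omega)
    subst hb12
    have hcc := hs.2 _ _ _ hb1 hb2
    exact Fin.castSucc_inj.1 hcc

lemma grow_shrink {s : Fin (m+1) → Option (Fin (m+1))} (hs : IsSuccF s) (hst : SStable s) :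
    grow (shrink s) = s := by
  funext a
  by_cases h : (a : ℕ) < m
  · have hcast : ((⟨(a : ℕ), h⟩ : Fin m)).castSucc = a := Fin.ext (by simp)
    rw [grow, dif_pos h, shrink, hcast]
    rcases hsa : s a with _ | b
    · rfl
    · have h2 := hst _ _ hsa
      have h0 : 0 < (b : ℕ) := by omega
      simp only [Option.bind_some, dif_pos h0, Option.map_some]
      exact congrArg some (Fin.ext (by simp [Fin.val_succ]; omega))
  · rw [grow, dif_neg h]
    rcases hsa : s a with _ | b
    · rfl
    · exfalso
      have := hst _ _ hsa
      have := b.isLt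
      omega

lemma shrink_grow (s' : Fin m → Option (Fin m)) : shrink (grow s') = s' := by
  funext a'
  have h : ((a'.castSucc : Fin (m+1)) : ℕ) < m := by simp
  have hmk : (⟨((a'.castSucc : Fin (m+1)) : ℕ), h⟩ : Fin m) = a' := Fin.ext (by simp)
  rw [shrink, grow, dif_pos h, hmk]
  rcases hsa : s' a' with _ | b'
  · rfl
  · simp only [Option.map_some, Option.bind_some, Fin.val_succ]
    rw [dif_pos (by omega)]
    exact congrArg some (Fin.ext (by simp))

/-- The equivalence between stable successor functions on `Fin (m+1)` and successor functions
on `Fin m`. -/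
noncomputable def equivA :
    {t : {s : Fin (m + 1) → Option (Fin (m + 1)) // IsSuccF s} // SStable t.1} ≃
      {s' : Fin m → Option (Fin m) // IsSuccF s'} where
  toFun t := ⟨shrink t.1.1, shrink_isSuccF t.1.2 t.2⟩
  invFun s' := ⟨⟨grow s'.1, grow_isSuccF s'.2⟩, grow_sstable s'.2⟩
  left_inv t := Subtype.ext (Subtype.ext (grow_shrink t.1.2 t.2))
  right_inv s' := Subtype.ext (shrink_grow s'.1)

lemma nones_grow (s' : Fin m → Option (Fin m)) :
    (Finset.univ.filter fun a => grow s' a = none).card =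
      (Finset.univ.filter fun a' => s' a' = none).card + 1 := by
  classical
  rw [Finset.card_filter, Finset.card_filter, Fin.sum_univ_castSucc]
  congr 1
  · apply Finset.sum_congr rfl
    intro a' _
    have h : ((a'.castSucc : Fin (m+1)) : ℕ) < m := by simp
    have hmk : (⟨((a'.castSucc : Fin (m+1)) : ℕ), h⟩ : Fin m) = a' := Fin.ext (by simp)
    rw [grow, dif_pos h, hmk]
    cases hsa : s' a' <;> simp [hsa]
  · rw [grow, dif_neg (by simp)]
    simp

/-- Restriction of a successor function on `Fin (m+1)` to `Fin m`. -/
def restr (s : Fin (m + 1) → Option (Fin (m + 1))) (a' : Fin m) : Option (Fin m) :=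
  (s a'.castSucc).bind fun b => if h : (b : ℕ) < m then some ⟨(b : ℕ), h⟩ else none

lemma restr_eq_some_iff {s : Fin (m+1) → Option (Fin (m+1))} {a' c : Fin m} :
    restr s a' = some c ↔ s a'.castSucc = some c.castSucc := by
  unfold restr
  rcases hs : s a'.castSucc with _ | b
  · simp
  · simp only [Option.bind_some, Option.some_inj]
    by_cases hb : (b : ℕ) < m
    · rw [dif_pos hb]
      constructor
      · intro h
        have h2 : (⟨(b : ℕ), hb⟩ : Fin m) = c := Option.some_inj.1 h
        subst h2
        exact Fin.ext (by simp)
      · intro h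
        subst h
        exact congrArg some (Fin.ext (by simp))
    · rw [dif_neg hb]
      constructor
      · intro h; exact absurd h (by simp)
      · intro h
        subst h
        exact absurd (by simp : ((c.castSucc : Fin (m+1)) : ℕ) < m) hb

lemma restr_eq_none_iff {s : Fin (m+1) → Option (Fin (m+1))} {a' : Fin m} :
    restr s a' = none ↔ s a'.castSucc = none ∨ s a'.castSucc = some (Fin.last m) := by
  unfold restr
  rcases hs : s a'.castSucc with _ | b
  · simp
  · simp only [Option.bind_some, Option.some_inj]
    by_cases hb : (b : ℕ) < m
    · rw [dif_pos hb]
      simp only [reduceCtorEq, false_or]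
      constructor
      · intro h; exact absurd h (by simp)
      · intro h
        subst h
        exact absurd hb (by simp)
    · rw [dif_neg hb]
      simp only [reduceCtorEq, false_or, true_iff]
      have := b.isLt
      exact Fin.ext (by rw [Fin.val_last]; omega)

lemma restr_isSuccF {s : Fin (m+1) → Option (Fin (m+1))} (hs : IsSuccF s) :
    IsSuccF (restr s) := by
  constructor
  · intro a' c h
    have := hs.1 _ _ (restr_eq_some_iff.1 h)
    rw [Fin.lt_def] at this ⊢
    simpa using this
  · intro a' c' c ha hc
    have := hs.2 _ _ _ (restr_eq_some_iff.1 ha) (restr_eq_some_iff.1 hc)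
    exact Fin.castSucc_inj.1 this

/-- The element pointing to `Fin.last m`, as extra data. -/
noncomputable def lastSrc (s : Fin (m + 1) → Option (Fin (m + 1))) (hs : IsSuccF s) :
    Option {a' : Fin m // restr s a' = none} :=
  if h : ∃ c, s c = some (Fin.last m) then
    some ⟨⟨(h.choose : ℕ), by
        have hlt := hs.1 _ _ h.choose_spec
        rw [Fin.lt_def, Fin.val_last] at hlt
        exact hlt⟩, by
      rw [restr_eq_none_iff]
      refine Or.inr ?_
      rw [show ((⟨(h.choose : ℕ), _⟩ : Fin m)).castSucc = h.choose from Fin.ext (by simp)]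
      exact h.choose_spec⟩
  else none

/-- Extension of a successor function on `Fin m` to `Fin (m+1)`, sending the element encoded
by `o` to `Fin.last m`. -/
def extendS (s' : Fin m → Option (Fin m)) (o : Option (Fin m)) (a : Fin (m + 1)) :
    Option (Fin (m + 1)) :=
  if h : (a : ℕ) < m then
    (s' ⟨a, h⟩).elim (if o = some ⟨a, h⟩ then some (Fin.last m) else none)
      (fun b => some b.castSucc)
  else none

lemma extendS_last {s' : Fin m → Option (Fin m)} {o : Option (Fin m)} :
    extendS s' o (Fin.last m) = none :=
  dif_neg (by simp)

lemma extendS_castSucc {s' : Fin m → Option (Fin m)} {o : Option (Fin m)} (a0 : Fin m) :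
    extendS s' o a0.castSucc =
      (s' a0).elim (if o = some a0 then some (Fin.last m) else none)
        (fun b => some b.castSucc) := by
  have h : ((a0.castSucc : Fin (m+1)) : ℕ) < m := by simp
  have hmk : (⟨((a0.castSucc : Fin (m+1)) : ℕ), h⟩ : Fin m) = a0 := Fin.ext (by simp)
  rw [extendS, dif_pos h, hmk]

lemma extendS_isSuccF {s' : Fin m → Option (Fin m)} (hs' : IsSuccF s') {o : Option (Fin m)} :
    IsSuccF (extendS s' o) := by
  constructor
  · intro a t h
    induction a using Fin.lastCases with
    | last => rw [extendS_last] at h; exact absurd h (by simp)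
    | cast a0 =>
      rw [extendS_castSucc] at h
      rcases hsa : s' a0 with _ | b <;> rw [hsa] at h <;> simp only [Option.elim] at h
      · split_ifs at h with ho
        obtain rfl := Option.some_inj.1 h
        rw [Fin.lt_def, Fin.val_last]
        simpa using a0.isLt
      · obtain rfl := Option.some_inj.1 h
        have h3 : (a0 : ℕ) < (b : ℕ) := hs'.1 _ _ hsa
        rw [Fin.lt_def]
        simpa using h3
  · intro a c t ha hc
    induction a using Fin.lastCases with
    | last => rw [extendS_last] at ha; exact absurd ha (by simp)
    | cast a0 =>
      induction c using Fin.lastCases with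
      | last => rw [extendS_last] at hc; exact absurd hc (by simp)
      | cast c0 =>
        rw [extendS_castSucc] at ha hc
        suffices hac : a0 = c0 by rw [hac]
        rcases hsa : s' a0 with _ | b1 <;> rw [hsa] at ha <;> simp only [Option.elim] at ha
        · split_ifs at ha with ho1
          · obtain rfl := Option.some_inj.1 ha
            rcases hsc : s' c0 with _ | b2 <;> rw [hsc] at hc <;> simp only [Option.elim] at hc
            · split_ifs at hc with ho2
              exact Option.some_inj.1 (ho1.symm.trans ho2)
            · exfalso
              have h2 := congrArg Fin.val (Option.some_inj.1 hc)
              simp only [Fin.coe_castSucc, Fin.val_last] at h2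
              have := b2.isLt
              omega
        · obtain rfl := Option.some_inj.1 ha
          rcases hsc : s' c0 with _ | b2 <;> rw [hsc] at hc <;> simp only [Option.elim] at hc
          · split_ifs at hc with ho2
            exfalso
            have h2 := congrArg Fin.val (Option.some_inj.1 hc)
            simp only [Fin.coe_castSucc, Fin.val_last] at h2
            have := b1.isLt
            omega
          · obtain rfl : b2 = b1 := Fin.castSucc_inj.1 (Option.some_inj.1 hc)
            exact hs'.2 _ _ _ hsa hsc

lemma heq_option_subtype {p q : Fin m → Prop} (hpq : ∀ a, p a ↔ q a)
    {x : Option {a // p a}} {y : Option {a // q a}}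
    (h : x.map Subtype.val = y.map Subtype.val) : HEq x y := by
  obtain rfl : p = q := funext fun a => propext (hpq a)
  exact heq_of_eq (Option.map_injective Subtype.val_injective h)

lemma restr_extendS (s' : Fin m → Option (Fin m)) (o : Option (Fin m)) :
    restr (extendS s' o) = s' := by
  funext a'
  rcases hsa : s' a' with _ | b
  · rw [restr_eq_none_iff, extendS_castSucc, hsa]
    simp only [Option.elim]
    split_ifs with ho
    · exact Or.inr rfl
    · exact Or.inl rfl
  · rw [restr_eq_some_iff, extendS_castSucc, hsa]
    simp only [Option.elim]

lemma extendS_eq_last_iff {s' : Fin m → Option (Fin m)} {o : Option (Fin m)} {x : Fin (m+1)} :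
    extendS s' o x = some (Fin.last m) ↔
      ∃ c0 : Fin m, x = c0.castSucc ∧ s' c0 = none ∧ o = some c0 := by
  constructor
  · intro h
    induction x using Fin.lastCases with
    | last => rw [extendS_last] at h; exact absurd h (by simp)
    | cast c0 =>
      rw [extendS_castSucc] at h
      rcases hsc : s' c0 with _ | b <;> rw [hsc] at h <;> simp only [Option.elim] at h
      · split_ifs at h with ho
        exact ⟨c0, rfl, hsc, ho⟩
      · exfalso
        have h2 := congrArg Fin.val (Option.some_inj.1 h)
        simp only [Fin.coe_castSucc, Fin.val_last] at h2
        have := b.isLt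
        omega
  · rintro ⟨c0, rfl, hn, ho⟩
    rw [extendS_castSucc, hn]
    simp only [Option.elim]
    rw [if_pos ho]

lemma lastSrc_map_val {s : Fin (m+1) → Option (Fin (m+1))} (hs : IsSuccF s) {c : Fin (m+1)}
    (hc : s c = some (Fin.last m)) :
    ∃ hlt : (c : ℕ) < m, (lastSrc s hs).map Subtype.val = some ⟨(c : ℕ), hlt⟩ := by
  have hex : ∃ x, s x = some (Fin.last m) := ⟨c, hc⟩
  have hch : hex.choose = c := hs.2 _ _ _ hex.choose_spec hc
  have hlt : (c : ℕ) < m := by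
    have h2 := hs.1 _ _ hc
    rw [Fin.lt_def, Fin.val_last] at h2
    exact h2
  refine ⟨hlt, ?_⟩
  rw [lastSrc, dif_pos hex]
  simp only [Option.map_some]
  exact congrArg some (Fin.ext (by simp [hch]))

lemma lastSrc_eq_none {s : Fin (m+1) → Option (Fin (m+1))} (hs : IsSuccF s)
    (h : ∀ c, s c ≠ some (Fin.last m)) : lastSrc s hs = none := by
  rw [lastSrc, dif_neg]
  rintro ⟨c, hc⟩
  exact h c hc

lemma lastSrc_spec {s : Fin (m+1) → Option (Fin (m+1))} (hs : IsSuccF s)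
    {x : {a' : Fin m // restr s a' = none}} (h : lastSrc s hs = some x) :
    s (x.1.castSucc) = some (Fin.last m) := by
  rw [lastSrc] at h
  split_ifs at h with hex
  have hx := Option.some_inj.1 h
  have hx1 := congrArg (fun z => ((z.1 : Fin m) : ℕ)) hx
  simp only at hx1
  have hcs : x.1.castSucc = hex.choose := Fin.ext (by simp [← hx1])
  rw [hcs]
  exact hex.choose_spec

/-- The main recursive equivalence on successor functions. -/
noncomputable def equivB :
    {s : Fin (m + 1) → Option (Fin (m + 1)) // IsSuccF s} ≃
      Σ s' : {f : Fin m → Option (Fin m) // IsSuccF f},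
        Option {a' : Fin m // s'.1 a' = none} where
  toFun t := ⟨⟨restr t.1, restr_isSuccF t.2⟩, lastSrc t.1 t.2⟩
  invFun p := ⟨extendS p.1.1 (p.2.map Subtype.val), extendS_isSuccF p.1.2⟩
  left_inv t := by
    obtain ⟨s, hs⟩ := t
    apply Subtype.ext
    funext a
    show extendS (restr s) ((lastSrc s hs).map Subtype.val) a = s a
    induction a using Fin.lastCases with
    | last =>
      rw [extendS_last]
      rcases hsa : s (Fin.last m) with _ | b
      · rfl
      · exfalso
        have h2 := hs.1 _ _ hsa
        rw [Fin.lt_def, Fin.val_last] at h2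
        have := b.isLt
        omega
    | cast a0 =>
      rw [extendS_castSucc]
      rcases hsa : s a0.castSucc with _ | b
      · have hr : restr s a0 = none := restr_eq_none_iff.2 (Or.inl hsa)
        rw [hr]
        simp only [Option.elim]
        split_ifs with ho
        · exfalso
          rcases hls : lastSrc s hs with _ | x
          · rw [hls] at ho; exact absurd ho (by simp)
          · rw [hls] at ho
            simp only [Option.map_some] at ho
            have hx : x.1 = a0 := Option.some_inj.1 ho
            have := lastSrc_spec hs hls
            rw [hx, hsa] at this
            exact absurd this (by simp)
        · rfl
      · by_cases hb : (b : ℕ) < m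
        · have hr : restr s a0 = some ⟨(b : ℕ), hb⟩ :=
            restr_eq_some_iff.2 (by rw [hsa]; exact congrArg some (Fin.ext (by simp)))
          rw [hr]
          simp only [Option.elim]
          exact congrArg some (Fin.ext (by simp))
        · have hbl : b = Fin.last m := Fin.ext (by rw [Fin.val_last]; have := b.isLt; omega)
          subst hbl
          have hr : restr s a0 = none := restr_eq_none_iff.2 (Or.inr hsa)
          rw [hr]
          simp only [Option.elim]
          obtain ⟨hlt, hmap⟩ := lastSrc_map_val hs hsa
          rw [if_pos (by rw [hmap]; exact congrArg some (Fin.ext (by simp)))]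
  right_inv p := by
    obtain ⟨⟨s', hs'⟩, o⟩ := p
    dsimp only
    have h1 : restr (extendS s' (o.map Subtype.val)) = s' := restr_extendS _ _
    refine Sigma.ext (Subtype.ext h1) (heq_option_subtype (fun a' => by dsimp only; rw [h1]) ?_)
    dsimp only
    rcases o with _ | x
    · simp only [Option.map_none]
      have hnone : lastSrc (extendS s' (none : Option (Fin m)))
          (extendS_isSuccF hs') = none := by
        apply lastSrc_eq_none
        intro c hc
        rw [extendS_eq_last_iff] at hc
        obtain ⟨c0, rfl, hn, ho⟩ := hc
        exact absurd ho (by simp)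
      rw [hnone]
      rfl
    · simp only [Option.map_some]
      have hc : extendS s' (some x.1) (x.1.castSucc) = some (Fin.last m) :=
        extendS_eq_last_iff.2 ⟨x.1, rfl, x.2, rfl⟩
      obtain ⟨hlt, hmap⟩ := lastSrc_map_val (extendS_isSuccF hs') hc
      rw [hmap]
      exact congrArg some (Fin.ext (by simp))

/-- The equivalence between stable partitions of the path graph on `Fin (m+1)` and all
partitions of `Fin m`. -/
noncomputable def stableEquiv :
    {P : Finpartition (Finset.univ : Finset (Fin (m+1))) //
        IsStablePartition (SimpleGraph.pathGraph (m+1)) P} ≃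
      Finpartition (Finset.univ : Finset (Fin m)) :=
  ((Equiv.subtypeEquiv (q := fun t => SStable t.1) partSuccEquiv
      (fun P => stable_iff P)).trans equivA).trans partSuccEquiv.symm

lemma stableEquiv_card (P : {P : Finpartition (Finset.univ : Finset (Fin (m+1))) //
    IsStablePartition (SimpleGraph.pathGraph (m+1)) P}) :
    P.1.parts.card = (stableEquiv P).parts.card + 1 := by
  obtain ⟨P, hP⟩ := P
  have hst : SStable (psucc P) := (stable_iff P).1 hP
  have hshr := shrink_isSuccF (psucc_isSuccF P) hst
  have hse : (stableEquiv ⟨P, hP⟩ : Finpartition (Finset.univ : Finset (Fin m))) =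
      ofSucc (shrink (psucc P)) hshr := rfl
  have h2 := nones_grow (shrink (psucc P))
  rw [grow_shrink (psucc_isSuccF P) hst] at h2
  rw [hse, card_parts_eq_nones, card_parts_eq_nones, psucc_ofSucc, h2]

lemma bell_succ_sum :
    bell (m+1) = ∑ P' : Finpartition (Finset.univ : Finset (Fin m)),
      (P'.parts.card + 1) := by
  classical
  have key : ∀ s' : {f : Fin m → Option (Fin m) // IsSuccF f},
      psucc ((partSuccEquiv.symm : _ ≃ Finpartition (Finset.univ : Finset (Fin m))) s')
        = s'.1 := fun s' => psucc_ofSucc s'.2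
  have E : Finpartition (Finset.univ : Finset (Fin (m+1))) ≃
      Σ P' : Finpartition (Finset.univ : Finset (Fin m)),
        Option {a' : Fin m // psucc P' a' = none} :=
    (partSuccEquiv.trans equivB).trans
      (Equiv.sigmaCongr partSuccEquiv.symm
        (fun s' => Equiv.optionCongr (Equiv.subtypeEquivRight (fun a' => by rw [key s']))))
  rw [bell, Nat.card_congr E]
  rw [Nat.card_eq_fintype_card, Fintype.card_sigma]
  apply Finset.sum_congr rfl
  intro P' _
  rw [Fintype.card_option, Fintype.card_subtype, ← card_parts_eq_nones]

end FinDev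

theorem stmt13 (n : ℕ) (hn : 1 ≤ n) :
    colA (SimpleGraph.pathGraph n) = (bell n : ℚ) / (bell (n - 1) : ℚ) := by
  classical
  obtain ⟨m, rfl⟩ : ∃ m, n = m + 1 := ⟨n - 1, by omega⟩
  set G := SimpleGraph.pathGraph (m+1) with hG
  have hfc : Fintype.card (Fin (m+1)) = m + 1 := Fintype.card_fin _
  have hcolS : ∀ k, colS G k =
      (Finset.univ.filter fun P : Finpartition (Finset.univ : Finset (Fin (m+1))) =>
        IsStablePartition G P ∧ P.parts.card = k).card := by
    intro k
    rw [colS, Set.ncard_eq_toFinset_card', Set.toFinset_setOf]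
  have hmaps : ∀ P ∈ (Finset.univ.filter
      fun P : Finpartition (Finset.univ : Finset (Fin (m+1))) => IsStablePartition G P),
      P.parts.card ∈ Finset.range (Fintype.card (Fin (m+1)) + 1) := by
    intro P _
    rw [Finset.mem_range, hfc]
    have h1 := P.card_parts_le_card
    rw [Finset.card_univ, hfc] at h1
    omega
  have hfib : ∀ k, (Finset.univ.filter
        fun P : Finpartition (Finset.univ : Finset (Fin (m+1))) =>
          IsStablePartition G P ∧ P.parts.card = k) =
      ((Finset.univ.filter fun P : Finpartition (Finset.univ : Finset (Fin (m+1))) =>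
        IsStablePartition G P).filter fun P => P.parts.card = k) := by
    intro k
    rw [Finset.filter_filter]
  have hB : colB G = (Finset.univ.filter
      fun P : Finpartition (Finset.univ : Finset (Fin (m+1))) =>
        IsStablePartition G P).card := by
    rw [colB, Finset.card_eq_sum_card_fiberwise hmaps]
    apply Finset.sum_congr rfl
    intro k _
    rw [hcolS k, hfib k]
  have hT : colT G = ∑ P ∈ (Finset.univ.filter
      fun P : Finpartition (Finset.univ : Finset (Fin (m+1))) =>
        IsStablePartition G P), P.parts.card := by
    rw [colT, ← Finset.sum_fiberwise_of_maps_to hmaps (fun P => P.parts.card)]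
    apply Finset.sum_congr rfl
    intro k _
    rw [hcolS k, hfib k]
    have hconst : ∑ P ∈ ((Finset.univ.filter
        fun P : Finpartition (Finset.univ : Finset (Fin (m+1))) =>
          IsStablePartition G P).filter fun P => P.parts.card = k), P.parts.card =
        ∑ _P ∈ ((Finset.univ.filter
        fun P : Finpartition (Finset.univ : Finset (Fin (m+1))) =>
          IsStablePartition G P).filter fun P => P.parts.card = k), k := by
      apply Finset.sum_congr rfl
      intro P hP
      exact (Finset.mem_filter.1 hP).2
    rw [hconst, Finset.sum_const, smul_eq_mul, mul_comm]
  have hBval : colB G = bell m := by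
    rw [hB]
    have h1 : (Finset.univ.filter
        fun P : Finpartition (Finset.univ : Finset (Fin (m+1))) =>
          IsStablePartition G P).card =
        Fintype.card {P : Finpartition (Finset.univ : Finset (Fin (m+1))) //
          IsStablePartition G P} := (Fintype.card_subtype _).symm
    rw [h1, ← Nat.card_eq_fintype_card, Nat.card_congr (stableEquiv (m := m)), bell]
  have hTval : colT G = bell (m+1) := by
    have hsub : ∑ P ∈ (Finset.univ.filter
        fun P : Finpartition (Finset.univ : Finset (Fin (m+1))) =>
          IsStablePartition G P), P.parts.card
        = ∑ P : {P : Finpartition (Finset.univ : Finset (Fin (m+1))) //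
            IsStablePartition G P}, P.1.parts.card :=
      Finset.sum_subtype _ (fun P => by simp) _
    rw [hT, hsub, bell_succ_sum]
    exact Fintype.sum_equiv stableEquiv _ _ stableEquiv_card
  rw [colA, hTval, hBval]
  norm_num
end

section
/- The sequence of Bell numbers is strictly log-convex: B_n² < B_{n−1}·B_{n+1} for all n ≥ 2. -/
open Finset

namespace BellAux

variable {m : ℕ}

/-- `Fin.castSucc` as an embedding. -/
def emb (m : ℕ) : Fin m ↪ Fin (m + 1) := ⟨Fin.castSucc, Fin.castSucc_injective m⟩

@[simp] lemma emb_apply (a : Fin m) : emb m a = Fin.castSucc a := rfl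

def up (p : Finset (Fin m)) : Finset (Fin (m + 1)) := p.map (emb m)

@[simp] lemma mem_up {p : Finset (Fin m)} {x : Fin (m + 1)} :
    x ∈ up p ↔ ∃ a ∈ p, Fin.castSucc a = x := by simp [up]

lemma up_injective : Function.Injective (up (m := m)) := Finset.map_injective (emb m)

@[simp] lemma last_not_mem_up (p : Finset (Fin m)) : Fin.last m ∉ up p := by
  simp only [mem_up, not_exists]
  rintro a ⟨ha, h⟩
  exact absurd h (Fin.castSucc_lt_last a).ne

lemma up_eq_empty {p : Finset (Fin m)} : up p = ∅ ↔ p = ∅ := Finset.map_eq_empty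

lemma disjoint_up {p q : Finset (Fin m)} : Disjoint (up p) (up q) ↔ Disjoint p q :=
  Finset.disjoint_map _

@[simp] lemma card_up (p : Finset (Fin m)) : (up p).card = p.card := Finset.card_map _

lemma erase_last_up (p : Finset (Fin m)) : (up p).erase (Fin.last m) = up p :=
  Finset.erase_eq_of_notMem (last_not_mem_up p)

noncomputable def down (q : Finset (Fin (m + 1))) : Finset (Fin m) :=
  q.preimage Fin.castSucc ((Fin.castSucc_injective m).injOn)

@[simp] lemma mem_down {q : Finset (Fin (m + 1))} {a : Fin m} :
    a ∈ down q ↔ Fin.castSucc a ∈ q := Finset.mem_preimage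

@[simp] lemma down_up (p : Finset (Fin m)) : down (up p) = p := by
  ext a
  simp only [mem_down, mem_up]
  constructor
  · rintro ⟨b, hb, h⟩; rwa [← (Fin.castSucc_injective m) h]
  · exact fun h => ⟨a, h, rfl⟩

lemma up_down {q : Finset (Fin (m + 1))} (hq : Fin.last m ∉ q) : up (down q) = q := by
  ext x
  simp only [mem_up, mem_down]
  constructor
  · rintro ⟨a, ha, rfl⟩; exact ha
  · intro hx
    rcases Fin.eq_castSucc_or_eq_last x with ⟨a, rfl⟩ | rfl
    · exact ⟨a, hx, rfl⟩
    · exact absurd hx hq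

lemma univ_succ : (univ : Finset (Fin (m + 1))) = insert (Fin.last m) (up univ) := by
  ext x
  simp only [mem_univ, mem_insert, mem_up, true_iff]
  rcases Fin.eq_castSucc_or_eq_last x with ⟨a, rfl⟩ | rfl
  · exact Or.inr ⟨a, by simp, rfl⟩
  · exact Or.inl rfl


lemma sup_image_up (parts : Finset (Finset (Fin m))) :
    (parts.image up).sup id = up (parts.sup id) := by
  ext x
  simp only [Finset.mem_sup, Finset.mem_image, id, mem_up]
  constructor
  · rintro ⟨v, ⟨p, hp, rfl⟩, hv⟩
    rcases mem_up.1 hv with ⟨a, ha, rfl⟩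
    exact ⟨a, ⟨p, hp, ha⟩, rfl⟩
  · rintro ⟨a, ha, rfl⟩
    rcases ha with ⟨p, hp, hap⟩
    exact ⟨up p, ⟨p, hp, rfl⟩, mem_up.2 ⟨a, hap, rfl⟩⟩

/-- Map a finpartition of `univ : Finset (Fin m)` to one of `up univ`. -/
def upP (P : Finpartition (univ : Finset (Fin m))) : Finpartition (up (univ : Finset (Fin m))) where
  parts := P.parts.image up
  supIndep := by
    rw [Finset.supIndep_iff_pairwiseDisjoint]
    rintro x hx y hy hxy
    simp only [coe_image, Set.mem_image, mem_coe] at hx hy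
    obtain ⟨p, hp, rfl⟩ := hx
    obtain ⟨q, hq, rfl⟩ := hy
    exact disjoint_up.2 (P.disjoint hp hq (fun h => hxy (by rw [h])))
  sup_parts := by rw [sup_image_up, P.sup_parts]
  bot_notMem := by
    simp only [bot_eq_empty, mem_image, not_exists]
    rintro p ⟨hp, h⟩
    have hpe : p = ∅ := up_eq_empty.1 h
    subst hpe
    exact P.bot_notMem hp

@[simp] lemma upP_parts (P : Finpartition (univ : Finset (Fin m))) :
    (upP P).parts = P.parts.image up := rfl


lemma sup_up_univ_last : up (univ : Finset (Fin m)) ⊔ {Fin.last m} = (univ : Finset (Fin (m+1))) := by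
  rw [sup_eq_union, univ_succ]
  rw [insert_eq]
  exact union_comm _ _

/-- Extend a partition of `Fin m` by the singleton part `{last}`. -/
noncomputable def extNone (P : Finpartition (univ : Finset (Fin m))) :
    Finpartition (univ : Finset (Fin (m+1))) :=
  (upP P).extend (b := {Fin.last m}) (by simp)
    (by rw [Finset.disjoint_singleton_right]; exact last_not_mem_up _)
    sup_up_univ_last

lemma extNone_parts (P : Finpartition (univ : Finset (Fin m))) :
    (extNone P).parts = insert {Fin.last m} (P.parts.image up) := rfl

lemma card_extNone (P : Finpartition (univ : Finset (Fin m))) :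
    (extNone P).parts.card = P.parts.card + 1 := by
  rw [extNone, Finpartition.card_extend, upP_parts,
    Finset.card_image_of_injective _ up_injective]

/-- Sup of the parts other than a given part. -/
lemma sup_erase_part (P : Finpartition (univ : Finset (Fin m))) {s : Finset (Fin m)}
    (hs : s ∈ P.parts) :
    (((upP P).parts).erase (up s)).sup id = up (univ : Finset (Fin m)) \ up s := by
  ext x
  simp only [Finset.mem_sup, mem_erase, id, mem_sdiff, upP_parts, mem_image]
  constructor
  · rintro ⟨v, ⟨hvne, p, hp, rfl⟩, hxv⟩
    have hps : p ≠ s := fun h => hvne (by rw [h])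
    have hd : Disjoint (up p) (up s) := disjoint_up.2 (P.disjoint hp hs hps)
    refine ⟨?_, fun hxs => (Finset.disjoint_left.1 hd) hxv hxs⟩
    rcases mem_up.1 hxv with ⟨a, _, rfl⟩
    exact mem_up.2 ⟨a, mem_univ a, rfl⟩
  · rintro ⟨hxu, hxs⟩
    rcases mem_up.1 hxu with ⟨a, _, rfl⟩
    have : a ∈ (univ : Finset (Fin m)) := mem_univ a
    rw [← P.sup_parts] at this
    rcases Finset.mem_sup.1 this with ⟨p, hp, hap⟩
    refine ⟨up p, ⟨fun h => hxs ?_, p, hp, rfl⟩, mem_up.2 ⟨a, hap, rfl⟩⟩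
    rw [← h]
    exact mem_up.2 ⟨a, hap, rfl⟩

/-- Extend a partition of `Fin m` by inserting `last` into the part `s`. -/
noncomputable def extSome (P : Finpartition (univ : Finset (Fin m))) (s : Finset (Fin m))
    (hs : s ∈ P.parts) : Finpartition (univ : Finset (Fin (m+1))) :=
  ((upP P).ofSubset (parts := ((upP P).parts).erase (up s)) (erase_subset _ _)
    (sup_erase_part P hs)).extend
    (b := insert (Fin.last m) (up s)) (by simp)
    (by
      rw [Finset.disjoint_insert_right]
      exact ⟨fun h => last_not_mem_up _ (mem_sdiff.1 h).1, sdiff_disjoint⟩)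
    (by
      have hsub : up s ⊆ up (univ : Finset (Fin m)) := fun x hx => by
        rcases mem_up.1 hx with ⟨a, _, rfl⟩
        exact mem_up.2 ⟨a, mem_univ a, rfl⟩
      rw [sup_eq_union, union_insert, sdiff_union_of_subset hsub, ← univ_succ])

lemma extSome_parts (P : Finpartition (univ : Finset (Fin m))) (s : Finset (Fin m))
    (hs : s ∈ P.parts) :
    (extSome P s hs).parts
      = insert (insert (Fin.last m) (up s)) ((P.parts.image up).erase (up s)) := rfl

lemma card_extSome (P : Finpartition (univ : Finset (Fin m))) (s : Finset (Fin m))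
    (hs : s ∈ P.parts) : (extSome P s hs).parts.card = P.parts.card := by
  rw [extSome, Finpartition.card_extend]
  simp only [Finpartition.ofSubset]
  rw [Finset.card_erase_of_mem (by exact mem_image_of_mem up hs),
    upP_parts, Finset.card_image_of_injective _ up_injective]
  have : 0 < P.parts.card := Finset.card_pos.2 ⟨s, hs⟩
  omega


@[simp] lemma down_empty : down (∅ : Finset (Fin (m+1))) = ∅ := by
  ext a; simp

lemma disjoint_down {q q' : Finset (Fin (m + 1))} (h : Disjoint q q') :
    Disjoint (down q) (down q') := by
  rw [Finset.disjoint_left] at h ⊢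
  intro a ha ha'
  exact h (mem_down.1 ha) (mem_down.1 ha')

lemma parts_eq (P Q : Finpartition (univ : Finset (Fin m))) (h : P.parts = Q.parts) : P = Q := by
  ext x
  rw [h]

/-- Restriction of a partition of `Fin (m+1)` to `Fin m`. -/
noncomputable def resP (Q : Finpartition (univ : Finset (Fin (m + 1)))) :
    Finpartition (univ : Finset (Fin m)) where
  parts := ((Q.parts.image (fun q => q.erase (Fin.last m))).erase ∅).image down
  supIndep := by
    rw [Finset.supIndep_iff_pairwiseDisjoint]
    rintro x hx y hy hxy
    simp only [coe_image, Set.mem_image, mem_coe, mem_erase, mem_image] at hx hy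
    obtain ⟨qe, ⟨hne1, q1, hq1, rfl⟩, rfl⟩ := hx
    obtain ⟨qe', ⟨hne2, q2, hq2, rfl⟩, rfl⟩ := hy
    have hq12 : q1 ≠ q2 := by
      rintro rfl
      exact hxy rfl
    exact disjoint_down (Finset.disjoint_of_subset_left (erase_subset _ _)
      (Finset.disjoint_of_subset_right (erase_subset _ _) (Q.disjoint hq1 hq2 hq12)))
  sup_parts := by
    refine le_antisymm (Finset.sup_le fun p _ => subset_univ p) fun a _ => ?_
    obtain ⟨q, hq, haq⟩ := Q.exists_mem (mem_univ (Fin.castSucc a))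
    have haq' : Fin.castSucc a ∈ q.erase (Fin.last m) :=
      mem_erase.2 ⟨(Fin.castSucc_lt_last a).ne, haq⟩
    refine Finset.mem_sup.2 ⟨down (q.erase (Fin.last m)), ?_, mem_down.2 haq'⟩
    exact mem_image_of_mem down (mem_erase.2
      ⟨fun h => by rw [h] at haq'; exact notMem_empty _ haq', mem_image_of_mem _ hq⟩)
  bot_notMem := by
    simp only [bot_eq_empty, mem_image, mem_erase]
    rintro ⟨qe, ⟨hne, q, hq, rfl⟩, hd⟩
    obtain ⟨x, hx⟩ := Finset.nonempty_iff_ne_empty.2 hne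
    rcases Fin.eq_castSucc_or_eq_last x with ⟨a, rfl⟩ | rfl
    · have : a ∈ down (q.erase (Fin.last m)) := mem_down.2 hx
      rw [hd] at this
      exact notMem_empty _ this
    · exact (mem_erase.1 hx).1 rfl

noncomputable def sOf (Q : Finpartition (univ : Finset (Fin (m + 1)))) : Finset (Fin m) :=
  down ((Q.part (Fin.last m)).erase (Fin.last m))

lemma part_last_mem (Q : Finpartition (univ : Finset (Fin (m + 1)))) :
    Q.part (Fin.last m) ∈ Q.parts := Q.part_mem.2 (mem_univ _)

lemma last_mem_part (Q : Finpartition (univ : Finset (Fin (m + 1)))) :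
    Fin.last m ∈ Q.part (Fin.last m) := Q.mem_part (mem_univ _)

lemma erase_ne_empty_of_sOf {Q : Finpartition (univ : Finset (Fin (m + 1)))} (h : sOf Q ≠ ∅) :
    (Q.part (Fin.last m)).erase (Fin.last m) ≠ ∅ := by
  intro he
  apply h
  rw [sOf, he, down_empty]

lemma sOf_mem {Q : Finpartition (univ : Finset (Fin (m + 1)))} (h : sOf Q ≠ ∅) :
    sOf Q ∈ (resP Q).parts := by
  refine mem_image_of_mem down (mem_erase.2 ⟨erase_ne_empty_of_sOf h, ?_⟩)
  exact mem_image_of_mem _ (part_last_mem Q)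

lemma empty_not_mem_image_up (P : Finpartition (univ : Finset (Fin m))) :
    ∅ ∉ P.parts.image up := by
  simp only [mem_image, not_exists]
  rintro p ⟨hp, h⟩
  have hpe : p = ∅ := up_eq_empty.1 h
  subst hpe
  exact P.bot_notMem hp

lemma image_down_image_up (parts : Finset (Finset (Fin m))) :
    (parts.image up).image down = parts := by
  rw [Finset.image_image]
  have : ∀ p ∈ parts, (down ∘ up) p = id p := fun p _ => down_up p
  rw [Finset.image_congr this, Finset.image_id]

/-- The parts of `resP Q`, mapped back up. -/
lemma resP_parts_image_up (Q : Finpartition (univ : Finset (Fin (m + 1)))) :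
    (resP Q).parts.image up = (Q.parts.image (fun q => q.erase (Fin.last m))).erase ∅ := by
  show (((Q.parts.image (fun q => q.erase (Fin.last m))).erase ∅).image down).image up = _
  rw [Finset.image_image]
  refine (Finset.image_congr fun qe hqe => ?_).trans Finset.image_id
  simp only [mem_coe, mem_erase, mem_image] at hqe
  obtain ⟨hne, q, hq, rfl⟩ := hqe
  exact up_down (notMem_erase _ _)

lemma image_eraseLast (Q : Finpartition (univ : Finset (Fin (m + 1)))) :
    Q.parts.image (fun q => q.erase (Fin.last m))
      = insert ((Q.part (Fin.last m)).erase (Fin.last m))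
          (Q.parts.erase (Q.part (Fin.last m))) := by
  conv_lhs => rw [← Finset.insert_erase (part_last_mem Q)]
  rw [Finset.image_insert]
  congr 1
  refine (Finset.image_congr fun q hq => ?_).trans Finset.image_id
  rw [mem_coe, mem_erase] at hq
  refine Finset.erase_eq_of_notMem fun hl => hq.1 ?_
  exact Q.eq_of_mem_parts hq.2 (part_last_mem Q) hl (last_mem_part Q)

lemma empty_notMem_erase_part (Q : Finpartition (univ : Finset (Fin (m + 1)))) :
    ∅ ∉ Q.parts.erase (Q.part (Fin.last m)) :=
  fun h => Q.bot_notMem (mem_of_mem_erase h)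

/-- Round trip A : restricting the `extNone` extension. -/
lemma resP_extNone (P : Finpartition (univ : Finset (Fin m))) : resP (extNone P) = P := by
  apply parts_eq
  show (((extNone P).parts.image (fun q => q.erase (Fin.last m))).erase ∅).image down = P.parts
  rw [extNone_parts, Finset.image_insert, Finset.erase_singleton, Finset.image_image]
  have : ∀ p ∈ P.parts, ((fun q => q.erase (Fin.last m)) ∘ up) p = up p :=
    fun p _ => erase_last_up p
  rw [Finset.image_congr this, Finset.erase_insert (empty_not_mem_image_up P),
    image_down_image_up]

lemma part_last_extNone (P : Finpartition (univ : Finset (Fin m))) :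
    (extNone P).part (Fin.last m) = {Fin.last m} := by
  refine (extNone P).eq_of_mem_parts (part_last_mem _) ?_ (last_mem_part _) (mem_singleton_self _)
  rw [extNone_parts]
  exact mem_insert_self _ _

lemma sOf_extNone (P : Finpartition (univ : Finset (Fin m))) : sOf (extNone P) = ∅ := by
  rw [sOf, part_last_extNone, Finset.erase_singleton, down_empty]

lemma part_last_extSome (P : Finpartition (univ : Finset (Fin m))) (s : Finset (Fin m))
    (hs : s ∈ P.parts) :
    (extSome P s hs).part (Fin.last m) = insert (Fin.last m) (up s) := by
  refine (extSome P s hs).eq_of_mem_parts (part_last_mem _) ?_ (last_mem_part _)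
    (mem_insert_self _ _)
  rw [extSome_parts]
  exact mem_insert_self _ _

lemma sOf_extSome (P : Finpartition (univ : Finset (Fin m))) (s : Finset (Fin m))
    (hs : s ∈ P.parts) : sOf (extSome P s hs) = s := by
  rw [sOf, part_last_extSome, Finset.erase_insert (last_not_mem_up s), down_up]

/-- Round trip C : restricting the `extSome` extension. -/
lemma resP_extSome (P : Finpartition (univ : Finset (Fin m))) (s : Finset (Fin m))
    (hs : s ∈ P.parts) : resP (extSome P s hs) = P := by
  apply parts_eq
  show (((extSome P s hs).parts.image (fun q => q.erase (Fin.last m))).erase ∅).image down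
    = P.parts
  rw [extSome_parts, Finset.image_insert, Finset.erase_insert (last_not_mem_up s)]
  have h1 : ((P.parts.image up).erase (up s)).image (fun q => q.erase (Fin.last m))
      = (P.parts.image up).erase (up s) := by
    refine (Finset.image_congr fun q hq => ?_).trans Finset.image_id
    rw [mem_coe] at hq
    obtain ⟨p, -, rfl⟩ := mem_image.1 (mem_of_mem_erase hq)
    exact erase_last_up p
  rw [h1, Finset.insert_erase (mem_image_of_mem up hs)]
  rw [Finset.erase_eq_of_notMem (empty_not_mem_image_up P), image_down_image_up]

/-- Round trip E : extending the restriction, singleton case. -/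
lemma extNone_resP (Q : Finpartition (univ : Finset (Fin (m + 1)))) (h : sOf Q = ∅) :
    extNone (resP Q) = Q := by
  have ht : (Q.part (Fin.last m)).erase (Fin.last m) = ∅ := by
    by_contra he
    obtain ⟨x, hx⟩ := Finset.nonempty_iff_ne_empty.2 he
    rcases Fin.eq_castSucc_or_eq_last x with ⟨a, rfl⟩ | rfl
    · have : a ∈ sOf Q := mem_down.2 hx
      rw [h] at this
      exact notMem_empty _ this
    · exact (mem_erase.1 hx).1 rfl
  have htl : Q.part (Fin.last m) = {Fin.last m} := by
    have := Finset.insert_erase (last_mem_part Q)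
    rw [ht] at this
    rw [← this]
    rfl
  apply parts_eq
  rw [extNone_parts, resP_parts_image_up, image_eraseLast, ht,
    Finset.erase_insert (empty_notMem_erase_part Q), ← htl,
    Finset.insert_erase (part_last_mem Q)]

/-- Round trip F : extending the restriction, general case. -/
lemma extSome_resP (Q : Finpartition (univ : Finset (Fin (m + 1)))) (h : sOf Q ≠ ∅) :
    extSome (resP Q) (sOf Q) (sOf_mem h) = Q := by
  have hterase : (Q.part (Fin.last m)).erase (Fin.last m) ≠ ∅ := erase_ne_empty_of_sOf h
  have hup : up (sOf Q) = (Q.part (Fin.last m)).erase (Fin.last m) :=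
    up_down (notMem_erase _ _)
  have hnot : (Q.part (Fin.last m)).erase (Fin.last m) ∉ Q.parts.erase (Q.part (Fin.last m)) := by
    intro hmem
    have hq := mem_of_mem_erase hmem
    have hne := (mem_erase.1 hmem).1
    obtain ⟨x, hx⟩ := Finset.nonempty_iff_ne_empty.2 hterase
    exact (Finset.disjoint_left.1 (Q.disjoint hq (part_last_mem Q) hne)) hx
      (mem_of_mem_erase hx)
  have hX : (resP Q).parts.image up
      = insert ((Q.part (Fin.last m)).erase (Fin.last m))
          (Q.parts.erase (Q.part (Fin.last m))) := by
    rw [resP_parts_image_up, image_eraseLast]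
    refine Finset.erase_eq_of_notMem ?_
    simp only [mem_insert, not_or]
    exact ⟨fun he => hterase he.symm, empty_notMem_erase_part Q⟩
  apply parts_eq
  rw [extSome_parts, hX, hup, Finset.erase_insert hnot,
    Finset.insert_erase (last_mem_part Q), Finset.insert_erase (part_last_mem Q)]


lemma key (m : ℕ) (w : ℕ → ℕ) :
    ∑ Q : Finpartition (univ : Finset (Fin (m + 1))), w Q.parts.card
      = ∑ P : Finpartition (univ : Finset (Fin m)),
          (w (P.parts.card + 1) + P.parts.card * w P.parts.card) := by
  classical
  have step1 :
      ∑ x ∈ (univ : Finset (Finpartition (univ : Finset (Fin m)) × Finset (Fin m))).filter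
          (fun x => x.2 = ∅ ∨ x.2 ∈ x.1.parts),
        w (x.1.parts.card + if x.2 = ∅ then 1 else 0)
      = ∑ Q : Finpartition (univ : Finset (Fin (m + 1))), w Q.parts.card := by
    refine Finset.sum_bij'
      (i := fun x hx => if h : x.2 = ∅ then extNone x.1
        else extSome x.1 x.2 (((mem_filter.1 hx).2).resolve_left h))
      (j := fun Q _ => (resP Q, sOf Q))
      (fun x hx => mem_univ _)
      (fun Q _ => ?_) ?_ ?_ ?_
    · refine mem_filter.2 ⟨mem_univ _, ?_⟩
      by_cases h : sOf Q = ∅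
      · exact Or.inl h
      · exact Or.inr (sOf_mem h)
    · rintro ⟨P, sf⟩ hx
      by_cases h : sf = ∅
      · subst h
        dsimp only
        rw [dif_pos rfl]
        rw [resP_extNone, sOf_extNone]
      · have hs : sf ∈ P.parts := ((mem_filter.1 hx).2).resolve_left h
        dsimp only
        rw [dif_neg h]
        rw [resP_extSome, sOf_extSome]
    · intro Q _
      dsimp only
      by_cases h : sOf Q = ∅
      · rw [dif_pos h]
        exact extNone_resP Q h
      · rw [dif_neg h]
        exact extSome_resP Q h
    · rintro ⟨P, sf⟩ hx
      dsimp only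
      by_cases h : sf = ∅
      · rw [dif_pos h, if_pos h, card_extNone]
      · have hs : sf ∈ P.parts := ((mem_filter.1 hx).2).resolve_left h
        rw [dif_neg h, if_neg h, card_extSome, Nat.add_zero]
  rw [← step1, Finset.sum_filter, Fintype.sum_prod_type]
  refine Finset.sum_congr rfl fun P _ => ?_
  have hfil : (univ : Finset (Finset (Fin m))).filter (fun sf => sf = ∅ ∨ sf ∈ P.parts)
      = insert ∅ P.parts := by
    ext sf
    simp [mem_insert]
  rw [← Finset.sum_filter, hfil]
  dsimp only
  rw [Finset.sum_insert (by simpa using P.bot_notMem), if_pos rfl]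
  congr 1
  rw [Finset.sum_congr rfl (fun sf hsf => by
    rw [if_neg (fun h => P.bot_notMem (show ⊥ ∈ P.parts from by
      rw [bot_eq_empty, ← h]; exact hsf))]),
    Finset.sum_const, smul_eq_mul, Nat.add_zero]

lemma bell_eq (k : ℕ) :
    Nat.card (Finpartition (univ : Finset (Fin k)))
      = Fintype.card (Finpartition (univ : Finset (Fin k))) := Nat.card_eq_fintype_card

lemma bellA (m : ℕ) :
    Fintype.card (Finpartition (univ : Finset (Fin (m + 1))))
      = ∑ P : Finpartition (univ : Finset (Fin m)), (P.parts.card + 1) := by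
  rw [Fintype.card_eq_sum_ones, key m (fun _ => 1)]
  refine Finset.sum_congr rfl fun P _ => ?_
  ring

lemma bellB (m : ℕ) :
    Fintype.card (Finpartition (univ : Finset (Fin (m + 2))))
      = ∑ P : Finpartition (univ : Finset (Fin m)), ((P.parts.card + 1) ^ 2 + 1) := by
  rw [bellA (m + 1)]
  rw [show (∑ P : Finpartition (univ : Finset (Fin (m + 1))), (P.parts.card + 1))
      = ∑ P : Finpartition (univ : Finset (Fin (m + 1))), (fun k => k + 1) P.parts.card from rfl,
    key m (fun k => k + 1)]
  refine Finset.sum_congr rfl fun P _ => ?_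
  ring

end BellAux

theorem stmt14 (n : ℕ) (hn : 2 ≤ n) :
    bell n ^ 2 < bell (n - 1) * bell (n + 1) := by
  classical
  obtain ⟨m, rfl⟩ : ∃ m, n = m + 1 := ⟨n - 1, by omega⟩
  simp only [Nat.add_sub_cancel]
  rw [bell, bell, bell, BellAux.bell_eq, BellAux.bell_eq, BellAux.bell_eq,
    BellAux.bellA m, show m + 1 + 1 = m + 2 from rfl, BellAux.bellB m]
  set N := Fintype.card (Finpartition (univ : Finset (Fin m))) with hN
  have hNpos : 0 < N := Fintype.card_pos_iff.2 ⟨⊥⟩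
  have hcs : (∑ P : Finpartition (univ : Finset (Fin m)), (P.parts.card + 1)) ^ 2
      ≤ N * ∑ P : Finpartition (univ : Finset (Fin m)), (P.parts.card + 1) ^ 2 := by
    have h := Finset.sum_mul_sq_le_sq_mul_sq (univ : Finset (Finpartition (univ : Finset (Fin m))))
      (fun _ => (1 : ℕ)) (fun P => P.parts.card + 1)
    simpa [Finset.card_univ] using h
  calc (∑ P : Finpartition (univ : Finset (Fin m)), (P.parts.card + 1)) ^ 2
      ≤ N * ∑ P : Finpartition (univ : Finset (Fin m)), (P.parts.card + 1) ^ 2 := hcs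
    _ < N * (∑ P : Finpartition (univ : Finset (Fin m)), (P.parts.card + 1) ^ 2) + N * N := by
        exact Nat.lt_add_of_pos_right (Nat.mul_pos hNpos hNpos)
    _ = N * ∑ P : Finpartition (univ : Finset (Fin m)), ((P.parts.card + 1) ^ 2 + 1) := by
        rw [Finset.sum_add_distrib, Finset.sum_const, smul_eq_mul, mul_one,
          Finset.card_univ, Nat.mul_add, ← hN]
end

section
/- For odd n ≥ 3, every p ≥ 0 and every 1 ≤ k ≤ n+p: S(C_n ∪ pK_1, k) = Σ_{i=0}^{(n−3)/2} S(Q_{2i+3} ∪ pK_1, k), where Q_m is the graph obtained from the path P_m by adding an edge between one endpoint v and the vertex at distance 2 from v on the path. -/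
open Finset

/-- `Qgraph m` : the path on `m` vertices plus the edge between vertex 0 and vertex 2. -/
def Qgraph (m : ℕ) : SimpleGraph (Fin m) :=
  SimpleGraph.fromRel (fun a b => (SimpleGraph.pathGraph m).Adj a b ∨ (a.val = 0 ∧ b.val = 2))


set_option linter.unusedSectionVars false

section Aux
variable {V : Type*} [Fintype V] [DecidableEq V]

instance finpartFinite : Finite (Finpartition (univ : Finset V)) :=
  Finite.of_injective Finpartition.parts fun _ _ h => Finpartition.ext h

/-- Stable partitions into k classes with u,v in the same class. -/
def sameClassSet (G : SimpleGraph V) (u v : V) (k : ℕ) : Set (Finpartition (univ : Finset V)) :=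
  {P | IsStablePartition G P ∧ P.parts.card = k ∧ ∃ p ∈ P.parts, u ∈ p ∧ v ∈ p}

lemma colS_congr {G G' : SimpleGraph V} (h : ∀ a b, G.Adj a b ↔ G'.Adj a b) (k : ℕ) :
    colS G k = colS G' k := by
  have : G = G' := by ext a b; exact h a b
  rw [this]

lemma colS_split {G G' : SimpleGraph V} {u v : V} (hne : u ≠ v)
    (h : ∀ a b, G'.Adj a b ↔ G.Adj a b ∨ (a = u ∧ b = v) ∨ (a = v ∧ b = u)) (k : ℕ) :
    colS G k = colS G' k + (sameClassSet G u v k).ncard := by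
  classical
  have hsub : {P : Finpartition (univ : Finset V) | IsStablePartition G P ∧ P.parts.card = k}
      = {P : Finpartition (univ : Finset V) | IsStablePartition G' P ∧ P.parts.card = k}
        ∪ sameClassSet G u v k := by
    ext P
    simp only [Set.mem_setOf_eq, Set.mem_union, sameClassSet]
    constructor
    · rintro ⟨hst, hcard⟩
      by_cases hsame : ∃ p ∈ P.parts, u ∈ p ∧ v ∈ p
      · exact Or.inr ⟨hst, hcard, hsame⟩
      · refine Or.inl ⟨?_, hcard⟩
        intro p hp a ha b hb hab
        rcases (h a b).1 hab with h1 | ⟨rfl, rfl⟩ | ⟨rfl, rfl⟩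
        · exact hst p hp a ha b hb h1
        · exact hsame ⟨p, hp, ha, hb⟩
        · exact hsame ⟨p, hp, hb, ha⟩
    · rintro (⟨hst, hcard⟩ | ⟨hst, hcard, hsame⟩)
      · exact ⟨fun p hp a ha b hb hab => hst p hp a ha b hb ((h a b).2 (Or.inl hab)), hcard⟩
      · exact ⟨hst, hcard⟩
  have hdisj : Disjoint
      {P : Finpartition (univ : Finset V) | IsStablePartition G' P ∧ P.parts.card = k}
      (sameClassSet G u v k) := by
    rw [Set.disjoint_left]
    rintro P ⟨hst, _⟩ ⟨_, _, p, hp, hu, hv⟩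
    exact hst p hp u hu v hv ((h u v).2 (Or.inr (Or.inl ⟨rfl, rfl⟩)))
  rw [colS, hsub, Set.ncard_union_eq hdisj (Set.toFinite _) (Set.toFinite _)]
  rfl

variable {W : Type*} [Fintype W] [DecidableEq W]

def pushPart (φ : W → V) (p : Finset V) : Finset W := univ.filter fun w => φ w ∈ p

def pullPart (φ : W → V) (u v : V) (q : Finset W) : Finset V :=
  if u ∈ q.image φ then insert v (q.image φ) else q.image φ

lemma mem_pushPart {φ : W → V} {p : Finset V} {w : W} : w ∈ pushPart φ p ↔ φ w ∈ p := by
  simp [pushPart]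

lemma mem_pullPart_of_ne {φ : W → V} {u v : V} {q : Finset W} {x : V} (hx : x ≠ v) :
    x ∈ pullPart φ u v q ↔ x ∈ q.image φ := by
  unfold pullPart; split <;> simp [hx]

lemma v_mem_pullPart {φ : W → V} {u v : V} (hv : ∀ w, φ w ≠ v) {q : Finset W} :
    v ∈ pullPart φ u v q ↔ u ∈ q.image φ := by
  unfold pullPart
  split
  · simp_all
  · simp only [mem_image]
    constructor
    · rintro ⟨w, _, hw⟩; exact absurd hw (hv w)
    · intro h; simp_all [mem_image]

def pushPartition (φ : W → V) (P : Finpartition (univ : Finset V)) :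
    Finpartition (univ : Finset W) :=
  Finpartition.ofErase (P.parts.image (pushPart φ))
    (by
      rw [Finset.supIndep_iff_pairwiseDisjoint]
      rintro q1 hq1 q2 hq2 hne12
      simp only [coe_image, Set.mem_image, mem_coe] at hq1 hq2
      obtain ⟨p1, hp1, rfl⟩ := hq1
      obtain ⟨p2, hp2, rfl⟩ := hq2
      rw [Function.onFun, Finset.disjoint_left]
      intro w hw1 hw2
      rw [id_eq, mem_pushPart] at hw1 hw2
      exact hne12 (by rw [P.eq_of_mem_parts hp1 hp2 hw1 hw2])
    )
    (by
      ext w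
      simp only [Finset.mem_sup, mem_univ, iff_true, id_eq]
      obtain ⟨p, hp, hw⟩ := P.exists_mem (mem_univ (φ w))
      exact ⟨pushPart φ p, mem_image_of_mem _ hp, mem_pushPart.2 hw⟩)

def pullPartition (φ : W → V) (u v : V) (hinj : Function.Injective φ) (hv : ∀ w, φ w ≠ v)
    (hsurj : ∀ x : V, x ≠ v → ∃ w, φ w = x) (hne : u ≠ v)
    (Q : Finpartition (univ : Finset W)) : Finpartition (univ : Finset V) where
  parts := Q.parts.image (pullPart φ u v)
  supIndep := by
    rw [Finset.supIndep_iff_pairwiseDisjoint]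
    rintro p1 hp1 p2 hp2 hne12
    simp only [coe_image, Set.mem_image, mem_coe] at hp1 hp2
    obtain ⟨q1, hq1, rfl⟩ := hp1
    obtain ⟨q2, hq2, rfl⟩ := hp2
    rw [Function.onFun, Finset.disjoint_left]
    intro x hx1 hx2
    rw [id_eq] at hx1 hx2
    apply hne12
    by_cases hxv : x = v
    · subst hxv
      rw [v_mem_pullPart hv, mem_image] at hx1 hx2
      obtain ⟨a, ha, hau⟩ := hx1
      obtain ⟨b, hb, hbu⟩ := hx2
      have : a = b := hinj (hau.trans hbu.symm)
      subst this
      rw [Q.eq_of_mem_parts hq1 hq2 ha hb]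
    · rw [mem_pullPart_of_ne hxv, mem_image] at hx1 hx2
      obtain ⟨a, ha, hau⟩ := hx1
      obtain ⟨b, hb, hbu⟩ := hx2
      have : a = b := hinj (hau.trans hbu.symm)
      subst this
      rw [Q.eq_of_mem_parts hq1 hq2 ha hb]
  sup_parts := by
    ext x
    simp only [Finset.mem_sup, mem_univ, iff_true, id_eq]
    by_cases hxv : x = v
    · rw [hxv]
      obtain ⟨w0, hw0⟩ := hsurj u hne
      obtain ⟨q, hq, hwq⟩ := Q.exists_mem (mem_univ w0)
      refine ⟨pullPart φ u v q, mem_image_of_mem _ hq, ?_⟩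
      rw [v_mem_pullPart hv, mem_image]
      exact ⟨w0, hwq, hw0⟩
    · obtain ⟨w, hw⟩ := hsurj x hxv
      obtain ⟨q, hq, hwq⟩ := Q.exists_mem (mem_univ w)
      refine ⟨pullPart φ u v q, mem_image_of_mem _ hq, ?_⟩
      rw [mem_pullPart_of_ne hxv, mem_image]
      exact ⟨w, hwq, hw⟩
  bot_notMem := by
    rw [bot_eq_empty, mem_image]
    rintro ⟨q, hq, hq0⟩
    obtain ⟨w, hw⟩ := Q.nonempty_of_mem_parts hq
    have : φ w ∈ pullPart φ u v q := by
      rw [mem_pullPart_of_ne (hv w), mem_image]; exact ⟨w, hw, rfl⟩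
    rw [hq0] at this
    exact notMem_empty _ this

lemma merge_count (G : SimpleGraph V) (u v : V) (hne : u ≠ v) (huv : ¬ G.Adj u v)
    (H : SimpleGraph W) (φ : W → V) (hinj : Function.Injective φ)
    (hv : ∀ w, φ w ≠ v) (hsurj : ∀ x : V, x ≠ v → ∃ w, φ w = x)
    (hadj : ∀ a b, H.Adj a b ↔
      (G.Adj (φ a) (φ b) ∨ (φ a = u ∧ G.Adj (φ b) v) ∨ (φ b = u ∧ G.Adj (φ a) v)))
    (k : ℕ) :
    (sameClassSet G u v k).ncard = colS H k := by
  classical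
  set A := sameClassSet G u v k with hA
  set B := {Q : Finpartition (univ : Finset W) | IsStablePartition H Q ∧ Q.parts.card = k}
    with hB
  -- parts of push for good P
  have hparts : ∀ (R : Finpartition (univ : Finset V)),
      (∀ p ∈ R.parts, (pushPart φ p).Nonempty) →
      (pushPartition φ R).parts = R.parts.image (pushPart φ) := by
    intro R hR
    show (R.parts.image (pushPart φ)).erase ⊥ = R.parts.image (pushPart φ)
    rw [Finset.erase_eq_self, bot_eq_empty, mem_image]
    rintro ⟨p, hp, hp0⟩
    obtain ⟨w, hw⟩ := hR p hp
    rw [hp0] at hw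
    exact notMem_empty _ hw
  have hgoodA : ∀ P ∈ A, ∀ p ∈ P.parts, (pushPart φ p).Nonempty := by
    rintro P ⟨hst, hcard, p0, hp0, hup0, hvp0⟩ p hp
    obtain ⟨x, hx⟩ := P.nonempty_of_mem_parts hp
    by_cases hxv : x = v
    · subst hxv
      have hpp0 : p = p0 := P.eq_of_mem_parts hp hp0 hx hvp0
      subst hpp0
      obtain ⟨w, hw⟩ := hsurj u hne
      exact ⟨w, mem_pushPart.2 (hw ▸ hup0)⟩
    · obtain ⟨w, hw⟩ := hsurj x hxv
      exact ⟨w, mem_pushPart.2 (hw ▸ hx)⟩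
  -- pushPart injective on parts which have nonempty push
  have hpushinj : ∀ (R : Finpartition (univ : Finset V)),
      (∀ p ∈ R.parts, (pushPart φ p).Nonempty) →
      Set.InjOn (pushPart φ) R.parts := by
    intro R hR p1 hp1 p2 hp2 heq
    obtain ⟨w, hw⟩ := hR p1 hp1
    have hw2 : w ∈ pushPart φ p2 := heq ▸ hw
    exact R.eq_of_mem_parts hp1 hp2 (mem_pushPart.1 hw) (mem_pushPart.1 hw2)
  -- forward maps into B
  have hmaps : ∀ P ∈ A, pushPartition φ P ∈ B := by
    intro P hPA
    obtain ⟨hst, hcard, p0, hp0, hup0, hvp0⟩ := hPA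
    have hgood := hgoodA P (by exact ⟨hst, hcard, p0, hp0, hup0, hvp0⟩)
    constructor
    · intro q hq a ha b hb hab
      rw [hparts P hgood, mem_image] at hq
      obtain ⟨p, hp, rfl⟩ := hq
      rw [mem_pushPart] at ha hb
      rcases (hadj a b).1 hab with h1 | ⟨h2, h3⟩ | ⟨h2, h3⟩
      · exact hst p hp _ ha _ hb h1
      · have hpp0 : p = p0 := P.eq_of_mem_parts hp hp0 (h2 ▸ ha) hup0
        exact hst p hp _ hb v (hpp0 ▸ hvp0) h3
      · have hpp0 : p = p0 := P.eq_of_mem_parts hp hp0 (h2 ▸ hb) hup0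
        exact hst p hp _ ha v (hpp0 ▸ hvp0) h3
    · rw [hparts P hgood, Finset.card_image_of_injOn (hpushinj P hgood)]
      exact hcard
  -- left inverse on A
  have hleft : ∀ P ∈ A, pullPartition φ u v hinj hv hsurj hne (pushPartition φ P) = P := by
    intro P hPA
    obtain ⟨hst, hcard, p0, hp0, hup0, hvp0⟩ := hPA
    have hgood := hgoodA P ⟨hst, hcard, p0, hp0, hup0, hvp0⟩
    apply Finpartition.ext
    show ((pushPartition φ P).parts).image (pullPart φ u v) = P.parts
    rw [hparts P hgood, Finset.image_image]
    have himid : ∀ p ∈ P.parts, pullPart φ u v (pushPart φ p) = p := by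
      intro p hp
      have himg : (pushPart φ p).image φ = p.erase v := by
        ext x
        rw [mem_image, Finset.mem_erase]
        constructor
        · rintro ⟨w, hw, rfl⟩
          exact ⟨hv w, mem_pushPart.1 hw⟩
        · rintro ⟨hxv, hxp⟩
          obtain ⟨w, hw⟩ := hsurj x hxv
          exact ⟨w, mem_pushPart.2 (hw ▸ hxp), hw⟩
      unfold pullPart
      rw [himg]
      by_cases hup : u ∈ p
      · have hpp0 : p = p0 := P.eq_of_mem_parts hp hp0 hup hup0
        have hvp : v ∈ p := hpp0 ▸ hvp0
        rw [if_pos (Finset.mem_erase.2 ⟨hne, hup⟩), Finset.insert_erase hvp]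
      · have hvp : v ∉ p := by
          intro hvp
          exact hup ((P.eq_of_mem_parts hp hp0 hvp hvp0) ▸ hup0)
        rw [if_neg (fun h => hup (Finset.mem_erase.1 h).2), Finset.erase_eq_self.2 hvp]
    calc P.parts.image (fun p => pullPart φ u v (pushPart φ p))
        = P.parts.image id := Finset.image_congr himid
      _ = P.parts := Finset.image_id
  -- pull maps into A
  have hpullA : ∀ Q ∈ B, pullPartition φ u v hinj hv hsurj hne Q ∈ A := by
    intro Q hQB
    obtain ⟨hst, hcard⟩ := hQB
    refine ⟨?_, ?_, ?_⟩
    · -- stable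
      intro p hp x hx y hy hxy
      show False
      rw [show (pullPartition φ u v hinj hv hsurj hne Q).parts
          = Q.parts.image (pullPart φ u v) from rfl, mem_image] at hp
      obtain ⟨q, hq, rfl⟩ := hp
      by_cases hxv : x = v
      · rw [hxv] at hx hxy
        by_cases hyv : y = v
        · rw [hyv] at hxy; exact G.loopless.irrefl _ hxy
        · rw [v_mem_pullPart hv, mem_image] at hx
          obtain ⟨a0, ha0, ha0u⟩ := hx
          rw [mem_pullPart_of_ne hyv, mem_image] at hy
          obtain ⟨b, hb, rfl⟩ := hy
          have := hst q hq a0 ha0 b hb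
          rw [hadj] at this
          push_neg at this
          exact this.2.1 ha0u hxy.symm
      · by_cases hyv : y = v
        · rw [hyv] at hy hxy
          rw [v_mem_pullPart hv, mem_image] at hy
          obtain ⟨a0, ha0, ha0u⟩ := hy
          rw [mem_pullPart_of_ne hxv, mem_image] at hx
          obtain ⟨b, hb, rfl⟩ := hx
          have := hst q hq a0 ha0 b hb
          rw [hadj] at this
          push_neg at this
          exact this.2.1 ha0u hxy
        · rw [mem_pullPart_of_ne hxv, mem_image] at hx
          rw [mem_pullPart_of_ne hyv, mem_image] at hy
          obtain ⟨a, ha, rfl⟩ := hx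
          obtain ⟨b, hb, rfl⟩ := hy
          have := hst q hq a ha b hb
          rw [hadj] at this
          push_neg at this
          exact this.1 hxy
    · -- card
      show (Q.parts.image (pullPart φ u v)).card = k
      rw [Finset.card_image_of_injOn, hcard]
      intro q1 hq1 q2 hq2 heq
      obtain ⟨w, hw⟩ := Q.nonempty_of_mem_parts hq1
      have h1 : φ w ∈ pullPart φ u v q1 := by
        rw [mem_pullPart_of_ne (hv w), mem_image]; exact ⟨w, hw, rfl⟩
      have h2 : φ w ∈ pullPart φ u v q2 := heq ▸ h1
      rw [mem_pullPart_of_ne (hv w), mem_image] at h2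
      obtain ⟨b, hb, hbw⟩ := h2
      have : b = w := hinj hbw
      subst this
      exact Q.eq_of_mem_parts hq1 hq2 hw hb
    · -- u,v same class
      obtain ⟨w0, hw0⟩ := hsurj u hne
      obtain ⟨q0, hq0, hwq0⟩ := Q.exists_mem (mem_univ w0)
      refine ⟨pullPart φ u v q0, mem_image_of_mem _ hq0, ?_, ?_⟩
      · rw [mem_pullPart_of_ne hne, mem_image]; exact ⟨w0, hwq0, hw0⟩
      · rw [v_mem_pullPart hv, mem_image]; exact ⟨w0, hwq0, hw0⟩
  -- right inverse on B
  have hright : ∀ Q ∈ B, pushPartition φ (pullPartition φ u v hinj hv hsurj hne Q) = Q := by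
    intro Q hQB
    apply Finpartition.ext
    have hgood : ∀ p ∈ (pullPartition φ u v hinj hv hsurj hne Q).parts,
        (pushPart φ p).Nonempty := by
      intro p hp
      rw [show (pullPartition φ u v hinj hv hsurj hne Q).parts
          = Q.parts.image (pullPart φ u v) from rfl, mem_image] at hp
      obtain ⟨q, hq, rfl⟩ := hp
      obtain ⟨w, hw⟩ := Q.nonempty_of_mem_parts hq
      refine ⟨w, mem_pushPart.2 ?_⟩
      rw [mem_pullPart_of_ne (hv w), mem_image]
      exact ⟨w, hw, rfl⟩
    rw [hparts _ hgood]
    show (Q.parts.image (pullPart φ u v)).image (pushPart φ) = Q.parts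
    rw [Finset.image_image]
    have himid : ∀ q ∈ Q.parts, pushPart φ (pullPart φ u v q) = q := by
      intro q hq
      ext w
      rw [mem_pushPart, mem_pullPart_of_ne (hv w), mem_image]
      constructor
      · rintro ⟨b, hb, hbw⟩
        rwa [hinj hbw] at hb
      · intro hw; exact ⟨w, hw, rfl⟩
    calc Q.parts.image (fun q => pushPart φ (pullPart φ u v q))
        = Q.parts.image id := Finset.image_congr himid
      _ = Q.parts := Finset.image_id
  -- conclude
  have hbij : Set.BijOn (pushPartition φ) A B := by
    refine ⟨hmaps, ?_, ?_⟩
    · intro P1 h1 P2 h2 heq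
      rw [← hleft P1 h1, ← hleft P2 h2, heq]
    · intro Q hQ
      exact ⟨pullPartition φ u v hinj hv hsurj hne Q, hpullA Q hQ, hright Q hQ⟩
  have hcolS : colS H k = B.ncard := rfl
  rw [hcolS, ← hbij.image_eq, Set.ncard_image_of_injOn hbij.injOn]

end Aux

section Graphs

@[simp] lemma graphUnion_adj_inl_inl {V W : Type*} (G : SimpleGraph V) (H : SimpleGraph W)
    (x y : V) : (graphUnion G H).Adj (Sum.inl x) (Sum.inl y) ↔ G.Adj x y := Iff.rfl

@[simp] lemma graphUnion_adj_inl_inr {V W : Type*} (G : SimpleGraph V) (H : SimpleGraph W)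
    (x : V) (y : W) : ¬ (graphUnion G H).Adj (Sum.inl x) (Sum.inr y) := fun h => h

@[simp] lemma graphUnion_adj_inr_inl {V W : Type*} (G : SimpleGraph V) (H : SimpleGraph W)
    (x : W) (y : V) : ¬ (graphUnion G H).Adj (Sum.inr x) (Sum.inl y) := fun h => h

@[simp] lemma graphUnion_adj_inr_inr {V W : Type*} (G : SimpleGraph V) (H : SimpleGraph W)
    (x y : W) : (graphUnion G H).Adj (Sum.inr x) (Sum.inr y) ↔ H.Adj x y := Iff.rfl

lemma cycle_adj_iff {m : ℕ} (hm : 2 ≤ m) (u v : Fin m) :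
    (SimpleGraph.cycleGraph m).Adj u v ↔
      (u.val + 1 = v.val ∨ v.val + 1 = u.val ∨
        (u.val = 0 ∧ v.val + 1 = m) ∨ (v.val = 0 ∧ u.val + 1 = m)) := by
  obtain ⟨m', rfl⟩ : ∃ m', m = m' + 2 := ⟨m - 2, by omega⟩
  have key : ∀ a b : Fin (m' + 2),
      a - b = 1 ↔ (b.val + 1 = a.val ∨ (a.val = 0 ∧ b.val + 1 = m' + 2)) := by
    intro a b
    rw [Fin.ext_iff, Fin.sub_def, Fin.val_one]
    simp only
    have ha := a.isLt
    have hb := b.isLt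
    rcases Nat.lt_or_ge ((m' + 2) - b.val + a.val) (m' + 2) with h | h
    · rw [Nat.mod_eq_of_lt h]; omega
    · rw [Nat.mod_eq_sub_mod h, Nat.mod_eq_of_lt (by omega)]; omega
  rw [SimpleGraph.cycleGraph_adj, key, key]
  omega

lemma Qgraph_adj {m : ℕ} (a b : Fin m) :
    (Qgraph m).Adj a b ↔ (a.val + 1 = b.val ∨ b.val + 1 = a.val ∨
      (a.val = 0 ∧ b.val = 2) ∨ (b.val = 0 ∧ a.val = 2)) := by
  unfold Qgraph
  rw [SimpleGraph.fromRel_adj]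
  simp only [SimpleGraph.pathGraph_adj]
  constructor
  · rintro ⟨hne, h⟩; tauto
  · intro h
    have hab : a.val ≠ b.val := by omega
    exact ⟨fun he => hab (congrArg Fin.val he), by tauto⟩

end Graphs

section Results

lemma resultA (s t p k : ℕ) (ht : 3 ≤ t) (hst : s = t + 1) :
    colS (graphUnion (SimpleGraph.pathGraph s) (⊥ : SimpleGraph (Fin p))) k =
      colS (graphUnion (SimpleGraph.cycleGraph s) (⊥ : SimpleGraph (Fin p))) k +
      colS (graphUnion (SimpleGraph.cycleGraph t) (⊥ : SimpleGraph (Fin p))) k := by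
  subst hst
  have hne : (Sum.inl ⟨0, by omega⟩ : Fin (t+1) ⊕ Fin p) ≠ Sum.inl ⟨t, by omega⟩ := by
    simp only [ne_eq, Sum.inl.injEq, Fin.mk.injEq]
    omega
  have hadj1 : ∀ a b : Fin (t+1) ⊕ Fin p,
      (graphUnion (SimpleGraph.cycleGraph (t+1)) (⊥ : SimpleGraph (Fin p))).Adj a b ↔
        (graphUnion (SimpleGraph.pathGraph (t+1)) (⊥ : SimpleGraph (Fin p))).Adj a b ∨
        (a = Sum.inl ⟨0, by omega⟩ ∧ b = Sum.inl ⟨t, by omega⟩) ∨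
        (a = Sum.inl ⟨t, by omega⟩ ∧ b = Sum.inl ⟨0, by omega⟩) := by
    rintro (x|x) (y|y)
    · have hx := x.isLt; have hy := y.isLt
      simp only [graphUnion_adj_inl_inl, Sum.inl.injEq,
        cycle_adj_iff (by omega : 2 ≤ t+1), SimpleGraph.pathGraph_adj, Fin.ext_iff]
      omega
    · simp
    · simp
    · simp
  have hsplit := colS_split hne hadj1 k
  have huv : ¬ (graphUnion (SimpleGraph.pathGraph (t+1)) (⊥ : SimpleGraph (Fin p))).Adj
      (Sum.inl ⟨0, by omega⟩) (Sum.inl ⟨t, by omega⟩) := by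
    simp only [graphUnion_adj_inl_inl, SimpleGraph.pathGraph_adj]
    omega
  have hinj : Function.Injective
      (Sum.map Fin.castSucc id : Fin t ⊕ Fin p → Fin (t+1) ⊕ Fin p) := by
    rintro (a|a) (b|b) h <;> clear hsplit hadj1 huv hne <;> simp_all [Fin.ext_iff]
  have hv : ∀ w : Fin t ⊕ Fin p,
      (Sum.map Fin.castSucc id : Fin t ⊕ Fin p → Fin (t+1) ⊕ Fin p) w
        ≠ Sum.inl ⟨t, by omega⟩ := by
    rintro (a|a) <;> simp [Fin.ext_iff] <;> omega
  have hsurj : ∀ x : Fin (t+1) ⊕ Fin p, x ≠ Sum.inl ⟨t, by omega⟩ →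
      ∃ w, (Sum.map Fin.castSucc id : Fin t ⊕ Fin p → Fin (t+1) ⊕ Fin p) w = x := by
    rintro (i|j) hx
    · have hi : i.val ≠ t := by
        intro h; exact hx (by simp [Sum.inl.injEq, Fin.ext_iff, h])
      have hi2 : i.val < t := by have := i.isLt; omega
      exact ⟨Sum.inl ⟨i.val, hi2⟩, by simp [Fin.ext_iff]⟩
    · exact ⟨Sum.inr j, rfl⟩
  have hadj2 : ∀ a b : Fin t ⊕ Fin p,
      (graphUnion (SimpleGraph.cycleGraph t) (⊥ : SimpleGraph (Fin p))).Adj a b ↔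
        ((graphUnion (SimpleGraph.pathGraph (t+1)) (⊥ : SimpleGraph (Fin p))).Adj
            (Sum.map Fin.castSucc id a) (Sum.map Fin.castSucc id b) ∨
          (Sum.map Fin.castSucc id a = Sum.inl ⟨0, by omega⟩ ∧
            (graphUnion (SimpleGraph.pathGraph (t+1)) (⊥ : SimpleGraph (Fin p))).Adj
              (Sum.map Fin.castSucc id b) (Sum.inl ⟨t, by omega⟩)) ∨
          (Sum.map Fin.castSucc id b = Sum.inl ⟨0, by omega⟩ ∧
            (graphUnion (SimpleGraph.pathGraph (t+1)) (⊥ : SimpleGraph (Fin p))).Adj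
              (Sum.map Fin.castSucc id a) (Sum.inl ⟨t, by omega⟩))) := by
    rintro (x|x) (y|y)
    · have hx := x.isLt; have hy := y.isLt
      simp only [Sum.map_inl, graphUnion_adj_inl_inl, Sum.inl.injEq,
        cycle_adj_iff (by omega : 2 ≤ t), SimpleGraph.pathGraph_adj, Fin.ext_iff,
        Fin.coe_castSucc, id_eq]
      omega
    · simp
    · simp
    · simp
  have hmerge := merge_count
      (graphUnion (SimpleGraph.pathGraph (t+1)) (⊥ : SimpleGraph (Fin p)))
      (Sum.inl ⟨0, by omega⟩) (Sum.inl ⟨t, by omega⟩) hne huv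
      (graphUnion (SimpleGraph.cycleGraph t) (⊥ : SimpleGraph (Fin p)))
      (Sum.map Fin.castSucc id) hinj hv hsurj hadj2 k
  rw [hsplit, hmerge]

end Results

section ResultB

def psi (t : ℕ) (j : Fin t) : Fin (t+1) :=
  if j.val = 0 then ⟨1, by have := j.isLt; omega⟩
  else if j.val = 1 then ⟨0, by omega⟩
  else ⟨j.val + 1, by have := j.isLt; omega⟩

lemma psi_val (t : ℕ) (j : Fin t) :
    (psi t j).val = if j.val = 0 then 1 else if j.val = 1 then 0 else j.val + 1 := by
  unfold psi; split_ifs <;> rfl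

lemma resultB (s t p k : ℕ) (ht : 3 ≤ t) (hst : s = t + 1) :
    colS (graphUnion (SimpleGraph.pathGraph s) (⊥ : SimpleGraph (Fin p))) k =
      colS (graphUnion (Qgraph s) (⊥ : SimpleGraph (Fin p))) k +
      colS (graphUnion (SimpleGraph.pathGraph t) (⊥ : SimpleGraph (Fin p))) k := by
  subst hst
  have hne : (Sum.inl ⟨0, by omega⟩ : Fin (t+1) ⊕ Fin p) ≠ Sum.inl ⟨2, by omega⟩ := by
    simp only [ne_eq, Sum.inl.injEq, Fin.mk.injEq]
    omega
  have hadj1 : ∀ a b : Fin (t+1) ⊕ Fin p,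
      (graphUnion (Qgraph (t+1)) (⊥ : SimpleGraph (Fin p))).Adj a b ↔
        (graphUnion (SimpleGraph.pathGraph (t+1)) (⊥ : SimpleGraph (Fin p))).Adj a b ∨
        (a = Sum.inl ⟨0, by omega⟩ ∧ b = Sum.inl ⟨2, by omega⟩) ∨
        (a = Sum.inl ⟨2, by omega⟩ ∧ b = Sum.inl ⟨0, by omega⟩) := by
    rintro (x|x) (y|y)
    · have hx := x.isLt; have hy := y.isLt
      simp only [graphUnion_adj_inl_inl, Sum.inl.injEq, Qgraph_adj,
        SimpleGraph.pathGraph_adj, Fin.ext_iff]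
      omega
    · simp
    · simp
    · simp
  have hsplit := colS_split hne hadj1 k
  have huv : ¬ (graphUnion (SimpleGraph.pathGraph (t+1)) (⊥ : SimpleGraph (Fin p))).Adj
      (Sum.inl ⟨0, by omega⟩) (Sum.inl ⟨2, by omega⟩) := by
    simp only [graphUnion_adj_inl_inl, SimpleGraph.pathGraph_adj]
    omega
  have hinj : Function.Injective
      (Sum.map (psi t) id : Fin t ⊕ Fin p → Fin (t+1) ⊕ Fin p) := by
    rintro (a|a) (b|b) h <;> clear hsplit hadj1 huv hne <;> simp_all [Fin.ext_iff]
    have hva := psi_val t a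
    have hvb := psi_val t b
    have := a.isLt; have := b.isLt
    rw [h] at hva
    split_ifs at hva hvb <;> omega
  have hv : ∀ w : Fin t ⊕ Fin p,
      (Sum.map (psi t) id : Fin t ⊕ Fin p → Fin (t+1) ⊕ Fin p) w
        ≠ Sum.inl ⟨2, by omega⟩ := by
    rintro (a|a) <;> simp [Fin.ext_iff]
    have hva := psi_val t a
    split_ifs at hva <;> omega
  have hsurj : ∀ x : Fin (t+1) ⊕ Fin p, x ≠ Sum.inl ⟨2, by omega⟩ →
      ∃ w, (Sum.map (psi t) id : Fin t ⊕ Fin p → Fin (t+1) ⊕ Fin p) w = x := by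
    rintro (i|j) hx
    · have hi : i.val ≠ 2 := by
        intro h; exact hx (by simp [Sum.inl.injEq, Fin.ext_iff, h])
      have hi2 : i.val < t + 1 := i.isLt
      by_cases h0 : i.val = 0
      · refine ⟨Sum.inl ⟨1, by omega⟩, ?_⟩
        simp only [Sum.map_inl, Sum.inl.injEq, Fin.ext_iff, psi_val]
        norm_num
        omega
      · by_cases h1 : i.val = 1
        · refine ⟨Sum.inl ⟨0, by omega⟩, ?_⟩
          simp only [Sum.map_inl, Sum.inl.injEq, Fin.ext_iff, psi_val]
          norm_num
          omega
        · refine ⟨Sum.inl ⟨i.val - 1, by omega⟩, ?_⟩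
          simp only [Sum.map_inl, Sum.inl.injEq, Fin.ext_iff, psi_val]
          split_ifs <;> omega
    · exact ⟨Sum.inr j, rfl⟩
  have hadj2 : ∀ a b : Fin t ⊕ Fin p,
      (graphUnion (SimpleGraph.pathGraph t) (⊥ : SimpleGraph (Fin p))).Adj a b ↔
        ((graphUnion (SimpleGraph.pathGraph (t+1)) (⊥ : SimpleGraph (Fin p))).Adj
            (Sum.map (psi t) id a) (Sum.map (psi t) id b) ∨
          (Sum.map (psi t) id a = Sum.inl ⟨0, by omega⟩ ∧
            (graphUnion (SimpleGraph.pathGraph (t+1)) (⊥ : SimpleGraph (Fin p))).Adj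
              (Sum.map (psi t) id b) (Sum.inl ⟨2, by omega⟩)) ∨
          (Sum.map (psi t) id b = Sum.inl ⟨0, by omega⟩ ∧
            (graphUnion (SimpleGraph.pathGraph (t+1)) (⊥ : SimpleGraph (Fin p))).Adj
              (Sum.map (psi t) id a) (Sum.inl ⟨2, by omega⟩))) := by
    rintro (x|x) (y|y)
    · have hx := x.isLt; have hy := y.isLt
      have hvx := psi_val t x
      have hvy := psi_val t y
      simp only [Sum.map_inl, graphUnion_adj_inl_inl, Sum.inl.injEq,
        SimpleGraph.pathGraph_adj, Fin.ext_iff]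
      split_ifs at hvx hvy <;> omega
    · simp
    · simp
    · simp
  have hmerge := merge_count
      (graphUnion (SimpleGraph.pathGraph (t+1)) (⊥ : SimpleGraph (Fin p)))
      (Sum.inl ⟨0, by omega⟩) (Sum.inl ⟨2, by omega⟩) hne huv
      (graphUnion (SimpleGraph.pathGraph t) (⊥ : SimpleGraph (Fin p)))
      (Sum.map (psi t) id) hinj hv hsurj hadj2 k
  rw [hsplit, hmerge]

end ResultB

section Assembly

lemma baseCase (p k : ℕ) :
    colS (graphUnion (SimpleGraph.cycleGraph 3) (⊥ : SimpleGraph (Fin p))) k =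
      colS (graphUnion (Qgraph 3) (⊥ : SimpleGraph (Fin p))) k := by
  apply colS_congr
  rintro (x|x) (y|y)
  · have hx := x.isLt; have hy := y.isLt
    simp only [graphUnion_adj_inl_inl, cycle_adj_iff (by omega : 2 ≤ 3), Qgraph_adj]
    omega
  · simp
  · simp
  · simp

lemma mainLemma (j p k : ℕ) :
    colS (graphUnion (SimpleGraph.cycleGraph (2*j+3)) (⊥ : SimpleGraph (Fin p))) k =
      ∑ i ∈ Finset.range (j+1),
        colS (graphUnion (Qgraph (2*i+3)) (⊥ : SimpleGraph (Fin p))) k := by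
  induction j with
  | zero =>
    rw [Finset.sum_range_one]
    exact baseCase p k
  | succ j ih =>
    rw [Finset.sum_range_succ, ← ih]
    have A1 := resultA (2*(j+1)+3) (2*j+4) p k (by omega) (by omega)
    have A2 := resultA (2*j+4) (2*j+3) p k (by omega) (by omega)
    have B1 := resultB (2*(j+1)+3) (2*j+4) p k (by omega) (by omega)
    omega

end Assembly

theorem stmt18 (n p k : ℕ) (hn : 3 ≤ n) (hodd : Odd n) (hk1 : 1 ≤ k) (hk2 : k ≤ n + p) :
    colS (graphUnion (SimpleGraph.cycleGraph n) (⊥ : SimpleGraph (Fin p))) k =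
      ∑ i ∈ Finset.range ((n - 3) / 2 + 1),
        colS (graphUnion (Qgraph (2 * i + 3)) (⊥ : SimpleGraph (Fin p))) k := by
  obtain ⟨m, hm⟩ := hodd
  set j := (n - 3) / 2 with hj
  have hn2 : n = 2 * j + 3 := by omega
  rw [hn2]
  exact mainLemma j p k
end
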